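/- arXiv:2211.02395 — 9 statements merged into one kernel-verified Lean document; each statement's English description precedes it below -/
import Mathlib

section
/- For any graph G, the orientable domination number of the join G + K₁ satisfies DOM(G) ≤ DOM(G + K₁) ≤ DOM(G) + 1. -/
open SimpleGraph

variable {V : Type*}

/-- `D` is an orientation of the simple graph `G`: arcs only along edges, and each edge
gets exactly one of its two possible directions. -/
def IsOrientation (G : SimpleGraph V) (D : V → V → Prop) : Prop :=
  (∀ u v, D u v → G.Adj u v) ∧ (∀ u v, G.Adj u v → (D u v ↔ ¬ D v u))

/-- `S` is a dominating set of the digraph `D`. -/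
def IsDomSet (D : V → V → Prop) (S : Finset V) : Prop :=
  ∀ v, v ∉ S → ∃ u ∈ S, D u v

/-- Domination number of a digraph. -/
noncomputable def domNum (D : V → V → Prop) : ℕ :=
  sInf {n | ∃ S : Finset V, S.card = n ∧ IsDomSet D S}

/-- Orientable domination number of a graph. -/
noncomputable def DOM (G : SimpleGraph V) : ℕ :=
  sSup {n | ∃ D : V → V → Prop, IsOrientation G D ∧ domNum D = n}

/-- Independence number. -/
noncomputable def indepNum (G : SimpleGraph V) : ℕ :=
  sSup {n | ∃ S : Finset V, S.card = n ∧ ∀ u ∈ S, ∀ v ∈ S, ¬ G.Adj u v}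

/-- Matching number. -/
noncomputable def matchNum (G : SimpleGraph V) : ℕ :=
  sSup {n | ∃ M : Finset (Sym2 V), M.card = n ∧ (∀ e ∈ M, e ∈ G.edgeSet) ∧
    ∀ e ∈ M, ∀ f ∈ M, e ≠ f → ∀ v, v ∈ e → v ∉ f}

/-- Maximum order of a bipartite induced subgraph. -/
noncomputable def bipNum (G : SimpleGraph V) : ℕ :=
  sSup {n | ∃ s : Finset V, s.card = n ∧ (G.induce (s : Set V)).Colorable 2}

/-- Join of `G` with a single universal vertex (`none`). -/
def joinK1 (G : SimpleGraph V) : SimpleGraph (Option V) :=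
  SimpleGraph.fromRel (fun a b => a = none ∨ ∃ u v, a = some u ∧ b = some v ∧ G.Adj u v)

/-- Lexicographic product `G ∘ H`. -/
def lexProd {W : Type*} (G : SimpleGraph V) (H : SimpleGraph W) : SimpleGraph (V × W) :=
  SimpleGraph.fromRel (fun a b => G.Adj a.1 b.1 ∨ (a.1 = b.1 ∧ H.Adj a.2 b.2))

/-- Corona `G ⊙ H`: vertex `(u, none)` is the vertex `u` of `G`, the vertices `(u, some w)`
form the copy of `H` joined to `u`. -/
def corona {W : Type*} (G : SimpleGraph V) (H : SimpleGraph W) : SimpleGraph (V × Option W) :=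
  SimpleGraph.fromRel (fun a b =>
    (a.2 = none ∧ b.2 = none ∧ G.Adj a.1 b.1) ∨
    (a.1 = b.1 ∧ ∃ w w', a.2 = some w ∧ b.2 = some w' ∧ H.Adj w w') ∨
    (a.1 = b.1 ∧ a.2 = none ∧ b.2 ≠ none))

/-- A digraph is acyclic if it has no directed cycle. -/
def DigraphAcyclic (D : V → V → Prop) : Prop :=
  ¬ ∃ (m : ℕ) (c : ℕ → V), 0 < m ∧ (∀ i < m, D (c i) (c (i + 1))) ∧ c m = c 0

/-- A packing of a digraph: no arc joins two of its vertices and no vertex has two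
out-neighbors in it. -/
def IsPacking (D : V → V → Prop) (P : Finset V) : Prop :=
  (∀ u ∈ P, ∀ v ∈ P, ¬ D u v) ∧
  (∀ u ∈ P, ∀ v ∈ P, u ≠ v → ∀ w, ¬ (D w u ∧ D w v))

/-- Packing number of a digraph. -/
noncomputable def packNum (D : V → V → Prop) : ℕ :=
  sSup {n | ∃ P : Finset V, P.card = n ∧ IsPacking D P}

lemma domNum_le_card {D : V → V → Prop} {S : Finset V} (h : IsDomSet D S) :
    domNum D ≤ S.card := Nat.sInf_le ⟨S, rfl, h⟩

lemma exists_min [Fintype V] (D : V → V → Prop) :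
    ∃ S : Finset V, S.card = domNum D ∧ IsDomSet D S := by
  have hne : (Finset.univ : Finset V).card ∈ {n | ∃ S : Finset V, S.card = n ∧ IsDomSet D S} :=
    ⟨Finset.univ, rfl, fun v hv => absurd (Finset.mem_univ v) hv⟩
  exact Nat.sInf_mem ⟨_, hne⟩

lemma DOM_bdd [Fintype V] (G : SimpleGraph V) :
    BddAbove {n | ∃ D : V → V → Prop, IsOrientation G D ∧ domNum D = n} := by
  refine ⟨Fintype.card V, fun n hn => ?_⟩
  obtain ⟨D, _, rfl⟩ := hn
  simpa using domNum_le_card (D := D) (S := Finset.univ)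
    (fun v hv => absurd (Finset.mem_univ v) hv)

lemma joinK1_adj {G : SimpleGraph V} {a b : Option V} :
    (joinK1 G).Adj a b ↔ (a = none ∧ b ≠ none) ∨ (b = none ∧ a ≠ none) ∨
      (∃ u v, a = some u ∧ b = some v ∧ G.Adj u v) := by
  cases a with
  | none => cases b <;> simp [joinK1, SimpleGraph.fromRel_adj]
  | some u =>
    cases b with
    | none => simp [joinK1, SimpleGraph.fromRel_adj]
    | some v =>
      simp only [joinK1, SimpleGraph.fromRel_adj]
      constructor
      · rintro ⟨hne, (h0|⟨x,y,h1,h2,h3⟩) | (h0|⟨x,y,h1,h2,h3⟩)⟩ <;>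
          first
          | (exact absurd h0 (by simp))
          | (cases h1; cases h2;
             exact Or.inr (Or.inr ⟨_, _, rfl, rfl, by first | exact h3 | exact h3.symm⟩))
      · rintro (⟨h1,_⟩|⟨h1,_⟩|⟨x,y,h1,h2,h3⟩)
        · exact absurd h1 (by simp)
        · exact absurd h1 (by simp)
        · cases h1; cases h2
          exact ⟨fun he => G.ne_of_adj h3 (Option.some_injective _ he),
            Or.inl (Or.inr ⟨_, _, rfl, rfl, h3⟩)⟩

theorem stmt0 {V : Type*} [Fintype V] (G : SimpleGraph V) :
    DOM G ≤ DOM (joinK1 G) ∧ DOM (joinK1 G) ≤ DOM G + 1 := by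
  classical
  constructor
  · -- lower bound
    apply csSup_le'
    rintro n ⟨D, hD, rfl⟩
    -- extend D to joinK1
    set D' : Option V → Option V → Prop := fun a b =>
      match a, b with
      | some u, some v => D u v
      | some _, none => True
      | _, _ => False with hD'def
    have hor : IsOrientation (joinK1 G) D' := by
      constructor
      · rintro (_|u) (_|v) h
        · exact absurd h not_false
        · exact absurd h not_false
        · exact joinK1_adj.mpr (Or.inr (Or.inl ⟨rfl, by simp⟩))
        · exact joinK1_adj.mpr (Or.inr (Or.inr ⟨u, v, rfl, rfl, hD.1 _ _ h⟩))
      · rintro (_|u) (_|v) h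
        · simp at h
        · simp [D']
        · simp [D']
        · have hadj : G.Adj u v := by
            rcases joinK1_adj.mp h with ⟨h1, _⟩ | ⟨h1, _⟩ | ⟨a, b, h1, h2, h3⟩
            · exact absurd h1 (by simp)
            · exact absurd h1 (by simp)
            · cases h1; cases h2; exact h3
          exact hD.2 _ _ hadj
    refine le_trans ?_ (le_csSup (DOM_bdd _) ⟨D', hor, rfl⟩)
    -- domNum D ≤ domNum D'
    obtain ⟨S', hcard, hdom⟩ := exists_min D'
    set S : Finset V := Finset.univ.filter (fun v => some v ∈ S') with hS
    have hdomS : IsDomSet D S := by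
      intro v hv
      have : some v ∉ S' := fun h => hv (by simp [hS, h])
      obtain ⟨u, hu, hDu⟩ := hdom _ this
      cases u with
      | none => exact absurd hDu not_false
      | some w => exact ⟨w, by simp [hS, hu], hDu⟩
    have hle : S.card ≤ S'.card := by
      apply Finset.card_le_card_of_injOn (fun v => some v)
      · intro v hv; simpa [hS] using hv
      · intro a _ b _ h; exact Option.some_injective _ h
    calc domNum D ≤ S.card := domNum_le_card hdomS
      _ ≤ S'.card := hle
      _ = domNum D' := hcard
  · -- upper bound
    apply csSup_le'
    rintro n ⟨D', hD', rfl⟩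
    set D : V → V → Prop := fun u v => D' (some u) (some v) with hDdef
    have hor : IsOrientation G D := by
      constructor
      · intro u v h
        rcases joinK1_adj.mp (hD'.1 _ _ h) with ⟨h1, _⟩ | ⟨h1, _⟩ | ⟨a, b, h1, h2, h3⟩
        · exact absurd h1 (by simp)
        · exact absurd h1 (by simp)
        · cases h1; cases h2; exact h3
      · intro u v h
        exact hD'.2 _ _ (joinK1_adj.mpr (Or.inr (Or.inr ⟨u, v, rfl, rfl, h⟩)))
    obtain ⟨S, hcard, hdom⟩ := exists_min D
    have hdom' : IsDomSet D' (insert none (S.image some)) := by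
      intro v hv
      cases v with
      | none => exact absurd (Finset.mem_insert_self _ _) hv
      | some w =>
        have hw : w ∉ S := fun h => hv (Finset.mem_insert_of_mem (Finset.mem_image_of_mem _ h))
        obtain ⟨u, hu, hDu⟩ := hdom _ hw
        exact ⟨some u, Finset.mem_insert_of_mem (Finset.mem_image_of_mem _ hu), hDu⟩
    have h1 : domNum D' ≤ (insert none (S.image some)).card := domNum_le_card hdom'
    have h2 : (insert none (S.image some)).card ≤ S.card + 1 := by
      refine le_trans (Finset.card_insert_le _ _) ?_
      simp [Finset.card_image_of_injective _ (Option.some_injective V)]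
    have h3 : domNum D ≤ DOM G := le_csSup (DOM_bdd G) ⟨D, hor, rfl⟩
    omega
end

section
/- If H is an induced subgraph of G, then DOM(G) ≥ DOM(H). -/
open SimpleGraph

variable {V : Type*}

lemma exists_orientation {V : Type*} (G : SimpleGraph V) :
    ∃ D, IsOrientation G D := by
  refine ⟨fun u v => G.Adj u v ∧ WellOrderingRel u v, fun u v h => h.1, fun u v h => ?_⟩
  have hne : u ≠ v := h.ne
  constructor
  · rintro ⟨-, hr⟩ ⟨-, hr'⟩
    exact asymm hr hr'
  · intro hn
    refine ⟨h, ?_⟩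
    rcases trichotomous_of WellOrderingRel u v with hr | he | hr
    · exact hr
    · exact absurd he hne
    · exact absurd ⟨h.symm, hr⟩ hn

lemma univ_domSet {V : Type*} [Fintype V] (D : V → V → Prop) :
    IsDomSet D (Finset.univ : Finset V) := fun v hv => absurd (Finset.mem_univ v) hv

lemma domNum_mem {V : Type*} [Fintype V] (D : V → V → Prop) :
    ∃ S : Finset V, S.card = domNum D ∧ IsDomSet D S := by
  have h : {n | ∃ S : Finset V, S.card = n ∧ IsDomSet D S}.Nonempty :=
    ⟨_, Finset.univ, rfl, univ_domSet D⟩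
  exact Nat.sInf_mem h

theorem stmt1 {V : Type*} [Fintype V] (G : SimpleGraph V) (s : Finset V) :
    DOM (G.induce (s : Set V)) ≤ DOM G := by
  classical
  set H := G.induce (s : Set V) with hH
  have hbdd : BddAbove {n | ∃ D : V → V → Prop, IsOrientation G D ∧ domNum D = n} := by
    refine ⟨Fintype.card V, ?_⟩
    rintro n ⟨D, -, rfl⟩
    exact Nat.sInf_le ⟨Finset.univ, by simp, univ_domSet D⟩
  have hne : {n | ∃ D, IsOrientation H D ∧ domNum D = n}.Nonempty := by
    obtain ⟨D', hD'⟩ := exists_orientation H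
    exact ⟨_, D', hD', rfl⟩
  refine csSup_le hne ?_
  rintro n ⟨D', hD', rfl⟩
  -- extend D' to an orientation D of G
  set D : V → V → Prop := fun u v => G.Adj u v ∧
    ((∃ (hu : u ∈ (s : Set V)) (hv : v ∈ (s : Set V)), D' ⟨u, hu⟩ ⟨v, hv⟩) ∨
     (u ∈ s ∧ v ∉ s) ∨
     (u ∉ s ∧ v ∉ s ∧ WellOrderingRel u v)) with hDdef
  have hD : IsOrientation G D := by
    constructor
    · exact fun u v h => h.1
    · intro u v hadj
      have hne' : u ≠ v := hadj.ne
      by_cases hu : u ∈ s <;> by_cases hv : v ∈ s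
      · have hu' : u ∈ (s : Set V) := hu
        have hv' : v ∈ (s : Set V) := hv
        have hiff := hD'.2 ⟨u, hu'⟩ ⟨v, hv'⟩ hadj
        constructor
        · rintro ⟨-, ⟨hu2, hv2, hd⟩ | ⟨-, hv2⟩ | ⟨hu2, -⟩⟩ ⟨-, ⟨hv3, hu3, hd'⟩ | ⟨-, hu2⟩ | ⟨hv2, -⟩⟩ <;>
            first
            | exact hv2 hv | exact hu2 hu
            | exact (hiff.mp hd) hd'
        · intro hn
          refine ⟨hadj, Or.inl ⟨hu', hv', ?_⟩⟩
          rw [hiff]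
          intro hd'
          exact hn ⟨hadj.symm, Or.inl ⟨hv', hu', hd'⟩⟩
      · constructor
        · rintro - ⟨-, ⟨hv3, -, -⟩ | ⟨hv3, -⟩ | ⟨-, hu3, -⟩⟩
          · exact hv hv3
          · exact hv hv3
          · exact hu3 hu
        · intro _; exact ⟨hadj, Or.inr (Or.inl ⟨hu, hv⟩)⟩
      · constructor
        · rintro ⟨-, ⟨hu2, -, -⟩ | ⟨hu2, -⟩ | ⟨-, hv2, -⟩⟩
          · exact (hu hu2).elim
          · exact (hu hu2).elim
          · exact (hv2 hv).elim
        · intro hn; exact absurd ⟨hadj.symm, Or.inr (Or.inl ⟨hv, hu⟩)⟩ hn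
      · constructor
        · rintro ⟨-, ⟨hu2, -, -⟩ | ⟨hu2, -⟩ | ⟨-, -, hr⟩⟩ ⟨-, ⟨hv2, -, -⟩ | ⟨hv2, -⟩ | ⟨-, -, hr'⟩⟩ <;>
            first
            | exact hu hu2 | exact hv hv2
            | exact asymm hr hr'
        · intro hn
          refine ⟨hadj, Or.inr (Or.inr ⟨hu, hv, ?_⟩)⟩
          rcases trichotomous_of WellOrderingRel u v with hr | he | hr
          · exact hr
          · exact absurd he hne'
          · exact absurd ⟨hadj.symm, Or.inr (Or.inr ⟨hv, hu, hr⟩)⟩ hn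
  have key : domNum D' ≤ domNum D := by
    obtain ⟨S, hScard, hSdom⟩ := domNum_mem D
    set S' : Finset {x // x ∈ (s : Set V)} := S.subtype _ with hS'
    have hdom' : IsDomSet D' S' := by
      rintro ⟨v, hvs⟩ hvS'
      have hvS : v ∉ S := fun h => hvS' (Finset.mem_subtype.mpr h)
      obtain ⟨u, huS, hadj, hcase⟩ := hSdom v hvS
      have hvs' : v ∈ s := hvs
      rcases hcase with ⟨hu2, hv2, hd⟩ | ⟨-, hv2⟩ | ⟨-, hv2, -⟩
      · exact ⟨⟨u, hu2⟩, Finset.mem_subtype.mpr huS, hd⟩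
      · exact absurd hvs' hv2
      · exact absurd hvs' hv2
    calc domNum D' ≤ S'.card := Nat.sInf_le ⟨S', rfl, hdom'⟩
      _ ≤ S.card := by rw [hS', Finset.card_subtype]; exact Finset.card_filter_le _ _
      _ = domNum D := hScard
  calc domNum D' ≤ domNum D := key
    _ ≤ DOM G := le_csSup hbdd ⟨D, hD, rfl⟩
end

section
/- If G is a bipartite graph, then DOM(G) = α(G). -/
open SimpleGraph

variable {V : Type*}

section Aux
variable {V : Type*} [Fintype V]

/-- Orient all edges away from `S`; edges not touching `S` by a fixed linear order. -/
noncomputable def orientAway (G : SimpleGraph V) (S : Finset V) : V → V → Prop :=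
  fun u v => G.Adj u v ∧ (u ∈ S ∨ (v ∉ S ∧
    ((Fintype.equivFin V u : ℕ) < (Fintype.equivFin V v : ℕ))))

theorem orientAway_isOrientation (G : SimpleGraph V) (S : Finset V)
    (hS : ∀ u ∈ S, ∀ v ∈ S, ¬ G.Adj u v) : IsOrientation G (orientAway G S) := by
  constructor
  · exact fun u v h => h.1
  · intro u v hadj
    have hne : (Fintype.equivFin V u : ℕ) ≠ (Fintype.equivFin V v : ℕ) := by
      intro h
      exact G.ne_of_adj hadj ((Fintype.equivFin V).injective (Fin.ext h))
    by_cases hu : u ∈ S <;> by_cases hv : v ∈ S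
    · exact absurd hadj (hS u hu v hv)
    · simp only [orientAway, hadj, hadj.symm, hu, hv]
      tauto
    · simp only [orientAway, hadj, hadj.symm, hu, hv]
      tauto
    · simp only [orientAway, hadj, hadj.symm, hu, hv]
      simp only [true_and, false_or, not_false_eq_true, true_and, not_or, not_and, not_lt]
      omega

/-- Kernel lemma: any orientation of a 2-colorable graph has an independent dominating set. -/
theorem exists_indep_domset (G : SimpleGraph V) (hbip : G.Colorable 2)
    (D : V → V → Prop) (hD : IsOrientation G D) :
    ∃ S : Finset V, IsDomSet D S ∧ ∀ u ∈ S, ∀ v ∈ S, ¬ G.Adj u v := by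
  obtain ⟨c⟩ := hbip
  classical
  set N : Set V → Set V := fun X => {v | ∃ u ∈ X, D u v} with hN
  have hNmono : Monotone N := by
    intro X X' hXX' v ⟨u, hu, hD'⟩
    exact ⟨u, hXX' hu, hD'⟩
  set A : Set V := {v | c v = 0} with hA
  set B : Set V := {v | c v = 1} with hB
  set f : Set V →o Set V :=
    ⟨fun X => A \ N (B \ N X), by
      intro X X' h
      exact Set.diff_subset_diff_right (hNmono (Set.diff_subset_diff_right (hNmono h)))⟩
    with hf
  set X : Set V := OrderHom.lfp f with hXdef
  have hX : f X = X := OrderHom.map_lfp f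
  set Y : Set V := B \ N X with hY
  have hXA : X = A \ N Y := by rw [← hX]; rfl
  refine ⟨(Set.toFinite (X ∪ Y)).toFinset, ?_, ?_⟩
  · intro v hv
    rw [Set.Finite.mem_toFinset, Set.mem_union] at hv
    push_neg at hv
    have h2 : c v = 0 ∨ c v = 1 := by
      have h := (c v).isLt
      have : (c v).val = 0 ∨ (c v).val = 1 := by omega
      rcases this with h | h <;> [left; right] <;> exact Fin.ext h
    rcases h2 with h0 | h1
    · have hvA : v ∈ A := h0
      have : v ∈ N Y := by
        by_contra hc
        exact hv.1 (hXA ▸ ⟨hvA, hc⟩)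
      obtain ⟨u, hu, hDu⟩ := this
      exact ⟨u, by rw [Set.Finite.mem_toFinset]; exact Or.inr hu, hDu⟩
    · have hvB : v ∈ B := h1
      have : v ∈ N X := by
        by_contra hc
        exact hv.2 ⟨hvB, hc⟩
      obtain ⟨u, hu, hDu⟩ := this
      exact ⟨u, by rw [Set.Finite.mem_toFinset]; exact Or.inl hu, hDu⟩
  · intro u hu v hv hadj
    rw [Set.Finite.mem_toFinset] at hu hv
    have hcol : c u ≠ c v := c.valid hadj
    have hor : D u v ∨ D v u := by
      by_cases h : D u v
      · exact Or.inl h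
      · exact Or.inr ((hD.2 v u hadj.symm).mpr h)
    have hXcu : ∀ w, w ∈ X → c w = 0 := fun w hw => (hXA ▸ hw).1
    have hYcu : ∀ w, w ∈ Y → c w = 1 := fun w hw => hw.1
    rcases hu with hu | hu <;> rcases hv with hv | hv
    · exact hcol (by rw [hXcu u hu, hXcu v hv])
    · -- u ∈ X, v ∈ Y
      rcases hor with h | h
      · exact hv.2 ⟨u, hu, h⟩
      · exact (hXA ▸ hu).2 ⟨v, hv, h⟩
    · -- u ∈ Y, v ∈ X
      rcases hor with h | h
      · exact (hXA ▸ hv).2 ⟨u, hu, h⟩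
      · exact hu.2 ⟨v, hv, h⟩
    · exact hcol (by rw [hYcu u hu, hYcu v hv])

end Aux

theorem stmt5 {V : Type*} [Fintype V] (G : SimpleGraph V) (hbip : G.Colorable 2) :
    DOM G = _root_.indepNum G := by
  classical
  have hubDom : ∀ D : V → V → Prop, domNum D ≤ Fintype.card V := by
    intro D
    refine Nat.sInf_le ⟨Finset.univ, Finset.card_univ, ?_⟩
    intro v hv
    exact absurd (Finset.mem_univ v) hv
  have hbddDOM : BddAbove {n | ∃ D : V → V → Prop, IsOrientation G D ∧ domNum D = n} := by
    refine ⟨Fintype.card V, ?_⟩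
    rintro n ⟨D, -, rfl⟩
    exact hubDom D
  have hbddInd :
      BddAbove {n | ∃ S : Finset V, S.card = n ∧ ∀ u ∈ S, ∀ v ∈ S, ¬ G.Adj u v} := by
    refine ⟨Fintype.card V, ?_⟩
    rintro n ⟨S, rfl, -⟩
    exact Finset.card_le_univ S
  apply le_antisymm
  · have hne : {n | ∃ D : V → V → Prop, IsOrientation G D ∧ domNum D = n}.Nonempty :=
      ⟨_, orientAway G ∅, orientAway_isOrientation G ∅ (by simp), rfl⟩
    refine csSup_le hne ?_
    rintro n ⟨D, hDor, rfl⟩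
    obtain ⟨S, hdom, hind⟩ := exists_indep_domset G hbip D hDor
    have h1 : domNum D ≤ S.card := Nat.sInf_le ⟨S, rfl, hdom⟩
    have h2 : S.card ≤ _root_.indepNum G := le_csSup hbddInd ⟨S, rfl, hind⟩
    exact h1.trans h2
  · have hneI : {n | ∃ S : Finset V, S.card = n ∧ ∀ u ∈ S, ∀ v ∈ S, ¬ G.Adj u v}.Nonempty :=
      ⟨0, ∅, by simp, by simp⟩
    obtain ⟨S, hScard, hSind⟩ := Nat.sSup_mem hneI hbddInd
    have hScard' : S.card = _root_.indepNum G := hScard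
    set D := orientAway G S with hDdef
    have hDor := orientAway_isOrientation G S hSind
    have hge : _root_.indepNum G ≤ domNum D := by
      refine le_csInf ⟨Fintype.card V, Finset.univ, Finset.card_univ,
        fun v hv => absurd (Finset.mem_univ v) hv⟩ ?_
      rintro n ⟨T, rfl, hT⟩
      rw [← hScard']
      refine Finset.card_le_card ?_
      intro v hvS
      by_contra hvT
      obtain ⟨u, huT, hadj, hcase⟩ := hT v hvT
      rcases hcase with huS | ⟨hvS', -⟩
      · exact hSind u huS v hvS hadj
      · exact hvS' hvS
    exact hge.trans (le_csSup hbddDOM ⟨D, hDor, rfl⟩)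
end

section
/- For every graph G, DOM(G) ≤ n(G) − α′(G), where n(G) is the number of vertices and α′(G) is the matching number of G. -/
open SimpleGraph

variable {V : Type*}

theorem stmt6 {V : Type*} [Fintype V] (G : SimpleGraph V) :
    DOM G ≤ Fintype.card V - matchNum G := by
  classical
  -- obtain a maximum matching
  set MS : Set ℕ := {n | ∃ M : Finset (Sym2 V), M.card = n ∧ (∀ e ∈ M, e ∈ G.edgeSet) ∧
    ∀ e ∈ M, ∀ f ∈ M, e ≠ f → ∀ v, v ∈ e → v ∉ f} with hMS
  have hne : MS.Nonempty := ⟨0, ∅, by simp⟩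
  have hbdd : BddAbove MS := by
    refine ⟨Fintype.card (Sym2 V), ?_⟩
    rintro n ⟨M, rfl, -⟩
    exact Finset.card_le_univ M
  have hmem : matchNum G ∈ MS := Nat.sSup_mem hne hbdd
  obtain ⟨M, hMcard, hMedge, hMdisj⟩ := hmem
  -- bound DOM
  by_cases hD : ({n | ∃ D : V → V → Prop, IsOrientation G D ∧ domNum D = n} : Set ℕ).Nonempty
  · refine csSup_le hD ?_
    rintro n ⟨D, ⟨hDadj, hDor⟩, rfl⟩
    -- define head function
    set h : Sym2 V → V := fun e =>
      if hx : ∃ v, v ∈ e ∧ ∃ u, u ∈ e ∧ D u v then hx.choose else (Quot.out e).1 with hh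
    have hex : ∀ e ∈ M, ∃ v, v ∈ e ∧ ∃ u, u ∈ e ∧ D u v := by
      intro e he
      obtain ⟨a, b⟩ := e
      have hab : G.Adj a b := (G.mem_edgeSet).1 (hMedge _ he)
      rcases Classical.em (D a b) with hd | hd
      · exact ⟨b, by simp, a, by simp, hd⟩
      · have hba : D b a := by
          by_contra hd'
          exact hd ((hDor a b hab).2 hd')
        exact ⟨a, by simp, b, by simp, hba⟩
    have hhspec : ∀ e ∈ M, h e ∈ e ∧ ∃ u, u ∈ e ∧ D u (h e) := by
      intro e he
      have hx := hex e he
      simp only [hh, dif_pos hx]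
      exact hx.choose_spec
    -- heads are distinct
    have hinj : Set.InjOn h M := by
      intro e he f hf hef
      by_contra hne'
      exact hMdisj e he f hf hne' (h e) (hhspec e he).1 (hef ▸ (hhspec f hf).1)
    set Hd : Finset V := M.image h with hHd
    have hHdcard : Hd.card = M.card := Finset.card_image_of_injOn hinj
    set S : Finset V := Finset.univ \ Hd with hS
    have hScard : S.card = Fintype.card V - matchNum G := by
      rw [hS, Finset.card_sdiff_of_subset (Finset.subset_univ _), Finset.card_univ, hHdcard, hMcard]
    -- no head is a tail
    have hdom : IsDomSet D S := by
      intro v hv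
      have hvH : v ∈ Hd := by
        by_contra hvH
        exact hv (Finset.mem_sdiff.2 ⟨Finset.mem_univ _, hvH⟩)
      obtain ⟨e, he, hev⟩ := Finset.mem_image.1 hvH
      obtain ⟨hve, u, hue, hDuv⟩ := hhspec e he
      rw [hev] at hve hDuv
      refine ⟨u, ?_, hDuv⟩
      rw [hS, Finset.mem_sdiff]
      refine ⟨Finset.mem_univ _, fun huH => ?_⟩
      obtain ⟨f, hf, hfu⟩ := Finset.mem_image.1 huH
      obtain ⟨hue', u', hu'e, hDu'u⟩ := hhspec f hf
      rw [hfu] at hue' hDu'u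
      have hef : e = f := by
        by_contra hne'
        exact hMdisj e he f hf hne' u hue hue'
      subst hef
      -- e contains u and v, u ≠ v, so u' ∈ {u, v}
      have huv : u ≠ v := (G.ne_of_adj (hDadj u v hDuv))
      obtain ⟨a, b⟩ := e
      simp only [Sym2.mem_iff] at hue hve hu'e
      have hadj : G.Adj u v := hDadj u v hDuv
      have : u' = u ∨ u' = v := by
        rcases hue with rfl | rfl <;> rcases hve with rfl | rfl <;> tauto
      rcases this with h1 | h1
      · rw [h1] at hDu'u; exact G.irrefl (hDadj u u hDu'u)
      · rw [h1] at hDu'u; exact ((hDor u v hadj).1 hDuv) hDu'u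
    have : domNum D ≤ S.card := Nat.sInf_le ⟨S, rfl, hdom⟩
    rw [hScard] at this
    exact this
  · rw [DOM, Set.not_nonempty_iff_eq_empty.1 hD, csSup_empty]
    exact Nat.zero_le _
end

section
/- If G and H are graphs with DOM(H + K₁) = DOM(H) + 1, then DOM(G ⊙ H) = DOM(H)·n(G) + DOM(G), where G ⊙ H is the corona of G and H. -/
open SimpleGraph

variable {V : Type*}

section MyHelpers

variable {V₀ : Type*}

lemma my_exists_orientation (G : SimpleGraph V₀) : ∃ D, IsOrientation G D := by
  refine ⟨fun u v => G.Adj u v ∧ WellOrderingRel u v, fun u v h => h.1, fun u v h => ?_⟩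
  constructor
  · rintro ⟨-, h1⟩ ⟨-, h2⟩
    exact (IsWellFounded.wf (r := @WellOrderingRel V₀)).asymmetric u v h1 h2
  · intro hn
    rcases trichotomous_of (@WellOrderingRel V₀) u v with h1 | rfl | h1
    · exact ⟨h, h1⟩
    · exact absurd rfl h.ne
    · exact absurd ⟨h.symm, h1⟩ hn

lemma my_isDomSet_univ [Fintype V₀] (D : V₀ → V₀ → Prop) : IsDomSet D Finset.univ :=
  fun v hv => absurd (Finset.mem_univ v) hv

lemma my_domNum_le [Fintype V₀] {D : V₀ → V₀ → Prop} {S : Finset V₀} (hS : IsDomSet D S) :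
    domNum D ≤ S.card := Nat.sInf_le ⟨S, rfl, hS⟩

lemma my_exists_domSet [Fintype V₀] (D : V₀ → V₀ → Prop) :
    ∃ S : Finset V₀, S.card = domNum D ∧ IsDomSet D S := by
  have hm : (Finset.univ : Finset V₀).card ∈ {n | ∃ S : Finset V₀, S.card = n ∧ IsDomSet D S} :=
    ⟨Finset.univ, rfl, my_isDomSet_univ D⟩
  exact Nat.sInf_mem ⟨_, hm⟩

lemma my_le_domNum [Fintype V₀] {D : V₀ → V₀ → Prop} {k : ℕ}
    (h : ∀ S : Finset V₀, IsDomSet D S → k ≤ S.card) : k ≤ domNum D := by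
  obtain ⟨S, hc, hS⟩ := my_exists_domSet D
  exact hc ▸ h S hS

lemma my_DOM_bddAbove [Fintype V₀] (G : SimpleGraph V₀) :
    BddAbove {n | ∃ D : V₀ → V₀ → Prop, IsOrientation G D ∧ domNum D = n} := by
  refine ⟨Fintype.card V₀, ?_⟩
  rintro n ⟨D, -, rfl⟩
  calc domNum D ≤ Finset.univ.card := my_domNum_le (my_isDomSet_univ D)
    _ = Fintype.card V₀ := Finset.card_univ

lemma my_DOM_nonempty [Fintype V₀] (G : SimpleGraph V₀) :
    {n | ∃ D : V₀ → V₀ → Prop, IsOrientation G D ∧ domNum D = n}.Nonempty := by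
  obtain ⟨D, hD⟩ := my_exists_orientation G
  exact ⟨_, D, hD, rfl⟩

lemma my_domNum_le_DOM [Fintype V₀] {G : SimpleGraph V₀} {D : V₀ → V₀ → Prop}
    (hD : IsOrientation G D) : domNum D ≤ DOM G :=
  le_csSup (my_DOM_bddAbove G) ⟨D, hD, rfl⟩

lemma my_exists_DOM_orientation [Fintype V₀] (G : SimpleGraph V₀) :
    ∃ D, IsOrientation G D ∧ domNum D = DOM G :=
  Nat.sSup_mem (my_DOM_nonempty G) (my_DOM_bddAbove G)

lemma my_DOM_le [Fintype V₀] {G : SimpleGraph V₀} {k : ℕ}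
    (h : ∀ D, IsOrientation G D → domNum D ≤ k) : DOM G ≤ k :=
  csSup_le (my_DOM_nonempty G) (by rintro n ⟨D, hD, rfl⟩; exact h D hD)

lemma my_corona_adj_none {W₀ : Type*} (G : SimpleGraph V₀) (H : SimpleGraph W₀) (u v : V₀) :
    (corona G H).Adj (u, (none : Option W₀)) (v, none) ↔ G.Adj u v := by
  constructor
  · intro hadj
    obtain ⟨hne, hr⟩ := (SimpleGraph.fromRel_adj _ _ _).mp hadj
    rcases hr with (⟨-, -, hG⟩ | ⟨-, w, w', hw, -⟩ | ⟨-, -, hb⟩) |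
        (⟨-, -, hG⟩ | ⟨-, w, w', hw, -⟩ | ⟨-, -, hb⟩)
    · exact hG
    · exact absurd hw (by simp)
    · exact absurd rfl hb
    · exact hG.symm
    · exact absurd hw (by simp)
    · exact absurd rfl hb
  · intro hadj
    have hne : (u, (none : Option W₀)) ≠ (v, none) := fun hh => hadj.ne (congrArg Prod.fst hh)
    exact (SimpleGraph.fromRel_adj _ _ _).mpr ⟨hne, Or.inl (Or.inl ⟨rfl, rfl, hadj⟩)⟩

lemma my_corona_adj_copy {W₀ : Type*} (G : SimpleGraph V₀) (H : SimpleGraph W₀) (u : V₀)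
    (a b : Option W₀) : (corona G H).Adj (u, a) (u, b) ↔ (joinK1 H).Adj a b := by
  constructor
  · intro hadj
    obtain ⟨hne, hr⟩ := (SimpleGraph.fromRel_adj _ _ _).mp hadj
    have hab : a ≠ b := fun hh => hne (by rw [hh])
    refine (SimpleGraph.fromRel_adj _ _ _).mpr ⟨hab, ?_⟩
    rcases hr with (⟨-, -, hG⟩ | ⟨-, w, w', hw, hw', hH⟩ | ⟨-, ha, hb⟩) |
        (⟨-, -, hG⟩ | ⟨-, w, w', hw, hw', hH⟩ | ⟨-, hb, ha⟩)
    · exact absurd hG (G.irrefl)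
    · exact Or.inl (Or.inr ⟨w, w', hw, hw', hH⟩)
    · exact Or.inl (Or.inl ha)
    · exact absurd hG (G.irrefl)
    · exact Or.inr (Or.inr ⟨w, w', hw, hw', hH⟩)
    · exact Or.inr (Or.inl hb)
  · intro hadj
    obtain ⟨hab, hr⟩ := (SimpleGraph.fromRel_adj _ _ _).mp hadj
    refine (SimpleGraph.fromRel_adj _ _ _).mpr ⟨fun hh => hab (congrArg Prod.snd hh), ?_⟩
    rcases hr with (ha | ⟨w, w', hw, hw', hH⟩) | (hb | ⟨w, w', hw, hw', hH⟩)
    · exact Or.inl (Or.inr (Or.inr ⟨rfl, ha, fun hh => hab (ha.trans hh.symm)⟩))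
    · exact Or.inl (Or.inr (Or.inl ⟨rfl, w, w', hw, hw', hH⟩))
    · exact Or.inr (Or.inr (Or.inr ⟨rfl, hb, fun hh => hab (hh.trans hb.symm)⟩))
    · exact Or.inr (Or.inr (Or.inl ⟨rfl, w, w', hw, hw', hH⟩))

lemma my_corona_adj_cross {W₀ : Type*} {G : SimpleGraph V₀} {H : SimpleGraph W₀}
    {u v : V₀} {a b : Option W₀} (huv : u ≠ v) (h : (corona G H).Adj (u, a) (v, b)) :
    a = none ∧ b = none ∧ G.Adj u v := by
  obtain ⟨-, hr⟩ := (SimpleGraph.fromRel_adj _ _ _).mp h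
  rcases hr with (⟨ha, hb, hG⟩ | ⟨he, -⟩ | ⟨he, -, -⟩) | (⟨hb, ha, hG⟩ | ⟨he, -⟩ | ⟨he, -, -⟩)
  · exact ⟨ha, hb, hG⟩
  · exact absurd he huv
  · exact absurd he huv
  · exact ⟨ha, hb, hG.symm⟩
  · exact absurd he.symm huv
  · exact absurd he.symm huv

lemma my_joinK1_adj_some {W₀ : Type*} (H : SimpleGraph W₀) (w w' : W₀) :
    (joinK1 H).Adj (some w) (some w') ↔ H.Adj w w' := by
  constructor
  · intro hadj
    obtain ⟨hne, hr⟩ := (SimpleGraph.fromRel_adj _ _ _).mp hadj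
    rcases hr with (hc | ⟨x, y, hx, hy, hH⟩) | (hc | ⟨x, y, hx, hy, hH⟩)
    · exact absurd hc (by simp)
    · cases hx; cases hy; exact hH
    · exact absurd hc (by simp)
    · cases hx; cases hy; exact hH.symm
  · intro hH
    exact (SimpleGraph.fromRel_adj _ _ _).mpr
      ⟨by simpa using hH.ne, Or.inl (Or.inr ⟨w, w', rfl, rfl, hH⟩)⟩

lemma my_corona_adj_some {W₀ : Type*} (G : SimpleGraph V₀) (H : SimpleGraph W₀) (u : V₀)
    (w w' : W₀) : (corona G H).Adj (u, some w) (u, some w') ↔ H.Adj w w' := by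
  rw [my_corona_adj_copy, my_joinK1_adj_some]

end MyHelpers

theorem stmt9 {V W : Type*} [Fintype V] [Fintype W]
    (G : SimpleGraph V) (H : SimpleGraph W)
    (h : DOM (joinK1 H) = DOM H + 1) :
    DOM (corona G H) = DOM H * Fintype.card V + DOM G := by
  classical
  have restrG : ∀ D : V × Option W → V × Option W → Prop, IsOrientation (corona G H) D →
      IsOrientation G (fun u v => D (u, none) (v, none)) := by
    intro D hD
    exact ⟨fun u v hd => (my_corona_adj_none G H u v).mp (hD.1 _ _ hd),
      fun u v hadj => hD.2 _ _ ((my_corona_adj_none G H u v).mpr hadj)⟩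
  have restrH : ∀ D : V × Option W → V × Option W → Prop, IsOrientation (corona G H) D →
      ∀ u : V, IsOrientation H (fun w w' => D (u, some w) (u, some w')) := by
    intro D hD u
    exact ⟨fun w w' hd => (my_corona_adj_some G H u w w').mp (hD.1 _ _ hd),
      fun w w' hadj => hD.2 _ _ ((my_corona_adj_some G H u w w').mpr hadj)⟩
  apply le_antisymm
  · -- upper bound
    apply my_DOM_le
    intro D hD
    obtain ⟨SG, hSGcard, hSGdom⟩ :=
      my_exists_domSet (fun u v => D (u, (none : Option W)) (v, none))
    have hSGle : SG.card ≤ DOM G := hSGcard ▸ my_domNum_le_DOM (restrG D hD)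
    have hSH : ∀ u : V, ∃ S : Finset W, S.card ≤ DOM H ∧
        IsDomSet (fun w w' => D (u, some w) (u, some w')) S := by
      intro u
      obtain ⟨S, hc, hdom⟩ := my_exists_domSet (fun w w' => D (u, some w) (u, some w'))
      exact ⟨S, hc ▸ my_domNum_le_DOM (restrH D hD u), hdom⟩
    choose SH hSHle hSHdom using hSH
    set T : Finset (V × Option W) :=
      SG.image (fun u => (u, (none : Option W))) ∪
        Finset.univ.biUnion (fun u => (SH u).image (fun w => (u, some w))) with hT
    have hTdom : IsDomSet D T := by
      rintro ⟨v1, v2⟩ hv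
      match v2 with
      | none =>
        have hv1 : v1 ∉ SG := by
          intro hh; exact hv (Finset.mem_union_left _ (Finset.mem_image_of_mem _ hh))
        obtain ⟨x, hx, hd⟩ := hSGdom v1 hv1
        exact ⟨(x, none), Finset.mem_union_left _ (Finset.mem_image_of_mem _ hx), hd⟩
      | some w =>
        have hw : w ∉ SH v1 := by
          intro hh
          exact hv (Finset.mem_union_right _ (Finset.mem_biUnion.mpr
            ⟨v1, Finset.mem_univ _, Finset.mem_image_of_mem _ hh⟩))
        obtain ⟨x, hx, hd⟩ := hSHdom v1 w hw
        exact ⟨(v1, some x), Finset.mem_union_right _ (Finset.mem_biUnion.mpr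
          ⟨v1, Finset.mem_univ _, Finset.mem_image_of_mem _ hx⟩), hd⟩
    have hcard : T.card ≤ DOM G + Fintype.card V * DOM H := by
      calc T.card
          ≤ (SG.image (fun u => (u, (none : Option W)))).card +
            (Finset.univ.biUnion (fun u => (SH u).image (fun w => (u, some w)))).card :=
            Finset.card_union_le _ _
        _ ≤ SG.card + ∑ u : V, ((SH u).image (fun w => (u, some w))).card :=
            add_le_add Finset.card_image_le (Finset.card_biUnion_le)
        _ ≤ DOM G + ∑ _u : V, DOM H :=
            add_le_add hSGle (Finset.sum_le_sum
              (fun u _ => le_trans Finset.card_image_le (hSHle u)))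
        _ = DOM G + Fintype.card V * DOM H := by
            rw [Finset.sum_const, Finset.card_univ, smul_eq_mul]
    calc domNum D ≤ T.card := my_domNum_le hTdom
      _ ≤ DOM G + Fintype.card V * DOM H := hcard
      _ = DOM H * Fintype.card V + DOM G := by ring
  · -- lower bound
    obtain ⟨DG, hDG, hDGval⟩ := my_exists_DOM_orientation G
    obtain ⟨DJ, hDJ, hDJval⟩ := my_exists_DOM_orientation (joinK1 H)
    rw [h] at hDJval
    set Dc : V × Option W → V × Option W → Prop := fun a b =>
      (a.2 = none ∧ b.2 = none ∧ DG a.1 b.1) ∨ (a.1 = b.1 ∧ DJ a.2 b.2) with hDcdef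
    have hDcOr : IsOrientation (corona G H) Dc := by
      constructor
      · rintro ⟨u, x⟩ ⟨v, y⟩ (⟨hx, hy, hg⟩ | ⟨he, hj⟩)
        · dsimp only at hx hy hg; subst hx; subst hy
          exact (my_corona_adj_none G H u v).mpr (hDG.1 _ _ hg)
        · dsimp only at he hj; subst he
          exact (my_corona_adj_copy G H u x y).mpr (hDJ.1 _ _ hj)
      · rintro ⟨u, x⟩ ⟨v, y⟩ hadj
        by_cases huv : u = v
        · subst huv
          have hjadj : (joinK1 H).Adj x y := (my_corona_adj_copy G H u x y).mp hadj
          have h1 : ∀ x y : Option W, Dc (u, x) (u, y) ↔ DJ x y := by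
            intro x y
            constructor
            · rintro (⟨-, -, hg⟩ | ⟨-, hj⟩)
              · exact absurd (hDG.1 _ _ hg) (G.irrefl)
              · exact hj
            · exact fun hj => Or.inr ⟨rfl, hj⟩
          rw [h1, h1]
          exact hDJ.2 _ _ hjadj
        · obtain ⟨hx, hy, hg⟩ := my_corona_adj_cross huv hadj
          subst hx; subst hy
          have h1 : ∀ u v : V, Dc (u, (none : Option W)) (v, none) ↔ DG u v := by
            intro u v
            constructor
            · rintro (⟨-, -, hg'⟩ | ⟨-, hj⟩)
              · exact hg'
              · exact absurd (hDJ.1 _ _ hj) ((joinK1 H).irrefl)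
            · exact fun hg' => Or.inl ⟨rfl, rfl, hg'⟩
          rw [h1, h1]
          exact hDG.2 _ _ hg
    refine le_trans ?_ (my_domNum_le_DOM hDcOr)
    apply my_le_domNum
    intro S hS
    set R : V → Finset (Option W) := fun u => (S.filter (fun a => a.1 = u)).image Prod.snd
      with hRdef
    have memR : ∀ (u : V) (x : Option W), x ∈ R u ↔ (u, x) ∈ S := by
      intro u x
      simp only [hRdef, Finset.mem_image, Finset.mem_filter]
      constructor
      · rintro ⟨⟨a1, a2⟩, ⟨haS, ha1⟩, ha2⟩
        dsimp only at ha1 ha2; subst ha1; subst ha2; exact haS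
      · exact fun hh => ⟨(u, x), ⟨hh, rfl⟩, rfl⟩
    set cov : V → Prop := fun u => (none : Option W) ∈ R u ∨ ∃ x ∈ R u, DJ x none with hcovdef
    have hsum : S.card = ∑ u : V, (S.filter (fun a => a.1 = u)).card :=
      Finset.card_eq_sum_card_fiberwise (fun x _ => Finset.mem_univ x.1)
    have hRle : ∀ u, (R u).card ≤ (S.filter (fun a => a.1 = u)).card :=
      fun u => Finset.card_image_le
    have hHdom : ∀ (u : V) (x : Option W), x ≠ none → x ∉ R u → ∃ y ∈ R u, DJ y x := by
      intro u x hxne hxR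
      match x, hxne with
      | some w, _ =>
        have hws : (u, some w) ∉ S := fun hh => hxR ((memR u _).mpr hh)
        obtain ⟨a, haS, had⟩ := hS _ hws
        obtain ⟨a1, a2⟩ := a
        rcases had with ⟨-, hnone, -⟩ | ⟨ha1, hj⟩
        · exact absurd hnone (by simp)
        · dsimp only at ha1 hj; subst ha1
          exact ⟨a2, (memR _ _).mpr haS, hj⟩
    have hkeyCov : ∀ u : V, cov u → DOM H + 1 ≤ (R u).card := by
      intro u hc
      have hdom : IsDomSet DJ (R u) := by
        intro x hxR
        by_cases hx : x = none
        · subst hx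
          rcases hc with hnone | ⟨y, hy, hjy⟩
          · exact absurd hnone hxR
          · exact ⟨y, hy, hjy⟩
        · exact hHdom u x hx hxR
      calc DOM H + 1 = domNum DJ := hDJval.symm
        _ ≤ (R u).card := my_domNum_le hdom
    have hkeyUncov : ∀ u : V, ¬ cov u → DOM H ≤ (R u).card := by
      intro u hnc
      have hdom : IsDomSet DJ (insert (none : Option W) (R u)) := by
        intro x hx
        have hxne : x ≠ none := fun hh => hx (hh ▸ Finset.mem_insert_self _ _)
        have hxR : x ∉ R u := fun hh => hx (Finset.mem_insert_of_mem hh)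
        obtain ⟨y, hy, hj⟩ := hHdom u x hxne hxR
        exact ⟨y, Finset.mem_insert_of_mem hy, hj⟩
      have h1 : DOM H + 1 ≤ (insert (none : Option W) (R u)).card := by
        calc DOM H + 1 = domNum DJ := hDJval.symm
          _ ≤ _ := my_domNum_le hdom
      have h2 : (insert (none : Option W) (R u)).card ≤ (R u).card + 1 :=
        Finset.card_insert_le _ _
      omega
    set Tc : Finset V := Finset.univ.filter cov with hTcdef
    set Nc : Finset V := Finset.univ.filter (fun u => ¬ cov u) with hNcdef
    have hTcdom : IsDomSet DG Tc := by
      intro u hu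
      have hnc : ¬ cov u := by
        intro hc
        exact hu (Finset.mem_filter.mpr ⟨Finset.mem_univ _, hc⟩)
      have hunS : (u, (none : Option W)) ∉ S := fun hh =>
        hnc (Or.inl ((memR u none).mpr hh))
      obtain ⟨a, haS, had⟩ := hS _ hunS
      obtain ⟨a1, a2⟩ := a
      rcases had with ⟨ha2, -, hg⟩ | ⟨ha1, hj⟩
      · dsimp only at ha2 hg; subst ha2
        refine ⟨a1, Finset.mem_filter.mpr ⟨Finset.mem_univ _,
          Or.inl ((memR a1 none).mpr haS)⟩, hg⟩
      · dsimp only at ha1 hj; subst ha1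
        exact absurd (Or.inr ⟨a2, (memR _ _).mpr haS, hj⟩) hnc
    have hDOMG : DOM G ≤ Tc.card := by
      calc DOM G = domNum DG := hDGval.symm
        _ ≤ Tc.card := my_domNum_le hTcdom
    have hsplit : Tc.card + Nc.card = Fintype.card V := by
      rw [hTcdef, hNcdef]
      rw [Finset.card_filter_add_card_filter_not]
      exact Finset.card_univ
    have hRsum : ∑ u : V, (R u).card ≤ S.card := by
      rw [hsum]
      exact Finset.sum_le_sum (fun u _ => hRle u)
    have hlow : Tc.card * (DOM H + 1) + Nc.card * DOM H ≤ ∑ u : V, (R u).card := by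
      rw [← Finset.sum_filter_add_sum_filter_not Finset.univ cov (fun u => (R u).card)]
      refine add_le_add ?_ ?_
      · calc Tc.card * (DOM H + 1) = ∑ _u ∈ Tc, (DOM H + 1) := by
              rw [Finset.sum_const, smul_eq_mul]
          _ ≤ ∑ u ∈ Tc, (R u).card :=
              Finset.sum_le_sum (fun u hu => hkeyCov u (Finset.mem_filter.mp hu).2)
      · calc Nc.card * DOM H = ∑ _u ∈ Nc, DOM H := by
              rw [Finset.sum_const, smul_eq_mul]
          _ ≤ ∑ u ∈ Nc, (R u).card :=
              Finset.sum_le_sum (fun u hu => hkeyUncov u (Finset.mem_filter.mp hu).2)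
    calc DOM H * Fintype.card V + DOM G
        = DOM H * Tc.card + DOM H * Nc.card + DOM G := by rw [← hsplit]; ring
      _ ≤ DOM H * Tc.card + DOM H * Nc.card + Tc.card := by
          exact add_le_add_right hDOMG _
      _ = Tc.card * (DOM H + 1) + Nc.card * DOM H := by ring
      _ ≤ ∑ u : V, (R u).card := hlow
      _ ≤ S.card := hRsum
end

section
/- DOM(K₃ □ K₃) = 4. -/
open SimpleGraph

variable {V : Type*}

section Aux

abbrev V9 := Fin 3 × Fin 3

abbrev G9 : SimpleGraph V9 := (⊤ : SimpleGraph (Fin 3)) □ (⊤ : SimpleGraph (Fin 3))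

instance : DecidableRel G9.Adj := fun u v =>
  decidable_of_iff (((⊤ : SimpleGraph (Fin 3)).Adj u.1 v.1 ∧ u.2 = v.2) ∨
    ((⊤ : SimpleGraph (Fin 3)).Adj u.2 v.2 ∧ u.1 = v.1)) SimpleGraph.boxProd_adj.symm

lemma adj_of (u v : V9) (hne : u ≠ v) (hsame : u.1 = v.1 ∨ u.2 = v.2) : G9.Adj u v := by
  rw [SimpleGraph.boxProd_adj]
  rcases hsame with h | h
  · refine Or.inr ⟨?_, h⟩
    simp only [SimpleGraph.top_adj]
    intro h2
    exact hne (Prod.ext h h2)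
  · refine Or.inl ⟨?_, h⟩
    simp only [SimpleGraph.top_adj]
    intro h2
    exact hne (Prod.ext h2 h)

lemma domset_mono {D : V9 → V9 → Prop} {S T : Finset V9} (hST : S ⊆ T)
    (h : IsDomSet D S) : IsDomSet D T := by
  intro v hv
  obtain ⟨u, hu, hd⟩ := h v (fun hvS => hv (hST hvS))
  exact ⟨u, hST hu, hd⟩

lemma domNum_le_four {D : V9 → V9 → Prop}
    (h : ∃ S : Finset V9, S.card ≤ 4 ∧ IsDomSet D S) : domNum D ≤ 4 := by
  obtain ⟨S, hc, hd⟩ := h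
  obtain ⟨T, hST, -, hT⟩ := Finset.exists_subsuperset_card_eq (S.subset_univ) hc (by decide)
  exact Nat.sInf_le ⟨T, hT, domset_mono hST hd⟩

lemma tri {E : Fin 3 → Fin 3 → Prop}
    (tot : ∀ x y, x ≠ y → E x y ∨ E y x)
    (asym : ∀ x y, E x y → ¬ E y x)
    (hns : ∀ x, ∃ y, y ≠ x ∧ E y x) :
    (∀ x, E x (x + 1)) ∨ (∀ x, E x (x + 2)) := by
  rcases tot 0 1 (by decide) with h01 | h10
  · have h20 : E 2 0 := by
      obtain ⟨y, hy, hEy⟩ := hns 0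
      fin_cases y
      · exact absurd rfl hy
      · exact absurd hEy (asym 0 1 h01)
      · exact hEy
    have h12 : E 1 2 := by
      obtain ⟨y, hy, hEy⟩ := hns 2
      fin_cases y
      · exfalso
        obtain ⟨z, hz, hEz⟩ := hns 0
        fin_cases z
        · exact hz rfl
        · exact asym 0 1 h01 hEz
        · exact asym 0 2 hEy hEz
      · exact hEy
      · exact absurd rfl hy
    left
    intro x
    fin_cases x
    · exact h01
    · exact h12
    · exact h20
  · have h21 : E 2 1 := by
      obtain ⟨y, hy, hEy⟩ := hns 1
      fin_cases y
      · exact absurd hEy (asym 1 0 h10)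
      · exact absurd rfl hy
      · exact hEy
    have h02 : E 0 2 := by
      obtain ⟨y, hy, hEy⟩ := hns 2
      fin_cases y
      · exact hEy
      · exfalso
        obtain ⟨z, hz, hEz⟩ := hns 1
        fin_cases z
        · exact asym 1 0 h10 hEz
        · exact hz rfl
        · exact asym 1 2 hEy hEz
      · exact absurd rfl hy
    right
    intro x
    fin_cases x
    · exact h02
    · exact h10
    · exact h21

lemma card_quad_le (a b c d : V9) : ({a, b, c, d} : Finset V9).card ≤ 4 := by
  refine le_trans (Finset.card_insert_le _ _) ?_
  have h2 : ({b, c, d} : Finset V9).card ≤ 3 := by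
    refine le_trans (Finset.card_insert_le _ _) ?_
    have h3 : ({c, d} : Finset V9).card ≤ 2 := by
      refine le_trans (Finset.card_insert_le _ _) ?_
      simp
    omega
  omega

lemma fin3_cases {x i : Fin 3} (h : x ≠ i) : x = i + 1 ∨ x = i + 2 := by
  revert h; revert x i; decide

lemma rowSource {D : V9 → V9 → Prop}
    (tot : ∀ u v : V9, u ≠ v → (u.1 = v.1 ∨ u.2 = v.2) → D u v ∨ D v u)
    (i j0 : Fin 3) (hsrc : ∀ j, j ≠ j0 → D (i, j0) (i, j)) :
    ∃ S : Finset V9, S.card ≤ 4 ∧ IsDomSet D S := by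
  classical
  set w : Fin 3 → V9 := fun j => if D (i + 1, j) (i + 2, j) then (i + 1, j) else (i + 2, j)
    with hw
  refine ⟨{(i, j0), w 0, w 1, w 2}, card_quad_le _ _ _ _, ?_⟩
  rintro ⟨x, y⟩ hv
  have hwS : w y ∈ ({(i, j0), w 0, w 1, w 2} : Finset V9) := by
    fin_cases y <;> simp
  have hij0 : (i, j0) ∈ ({(i, j0), w 0, w 1, w 2} : Finset V9) := by simp
  by_cases hx : x = i
  · by_cases hy : y = j0
    · exfalso; apply hv; rw [hx, hy]; exact hij0
    · refine ⟨(i, j0), hij0, ?_⟩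
      rw [hx]
      exact hsrc y hy
  · have hne12 : (i + 1, y) ≠ ((i + 2, y) : V9) := by
      intro h
      have h12 : ∀ z : Fin 3, z + 1 ≠ z + 2 := by decide
      exact h12 i (congrArg Prod.fst h)
    by_cases hD : D (i + 1, y) (i + 2, y)
    · have hwy : w y = (i + 1, y) := if_pos hD
      rcases fin3_cases hx with h1 | h2
      · exfalso; apply hv; rw [h1, ← hwy]; exact hwS
      · exact ⟨w y, hwS, by rw [hwy, h2]; exact hD⟩
    · have hD' : D (i + 2, y) (i + 1, y) :=
        (tot _ _ hne12 (Or.inr rfl)).resolve_left hD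
      have hwy : w y = (i + 2, y) := if_neg hD
      rcases fin3_cases hx with h1 | h2
      · exact ⟨w y, hwS, by rw [hwy, h1]; exact hD'⟩
      · exfalso; apply hv; rw [h2, ← hwy]; exact hwS

lemma transpose_dom {D : V9 → V9 → Prop}
    (h : ∃ S : Finset V9, S.card ≤ 4 ∧
      IsDomSet (fun u v : V9 => D (u.2, u.1) (v.2, v.1)) S) :
    ∃ S : Finset V9, S.card ≤ 4 ∧ IsDomSet D S := by
  obtain ⟨S, hc, hd⟩ := h
  refine ⟨S.image (fun p : V9 => (p.2, p.1)), le_trans Finset.card_image_le hc, ?_⟩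
  intro v hv
  have hv' : ((v.2, v.1) : V9) ∉ S := by
    intro h
    apply hv
    have := Finset.mem_image_of_mem (fun p : V9 => (p.2, p.1)) h
    simpa using this
  obtain ⟨u, hu, hDu⟩ := hd _ hv'
  exact ⟨(u.2, u.1), Finset.mem_image_of_mem _ hu, by simpa using hDu⟩

instance {D : V9 → V9 → Prop} [DecidableRel D] (S : Finset V9) :
    Decidable (IsDomSet D S) := by
  unfold IsDomSet; infer_instance

def cycB (a b : Fin 3 → Bool) (p q : V9) : Bool :=
  (p.1 == q.1 && q.2 == p.2 + (if a p.1 then 1 else 2)) ||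
  (p.2 == q.2 && q.1 == p.1 + (if b p.2 then 1 else 2))

set_option maxRecDepth 100000 in
set_option maxHeartbeats 4000000 in
lemma cycDom : ∀ a b : Fin 3 → Bool,
    ∃ S : Finset V9, S.card ≤ 4 ∧ IsDomSet (fun u v => cycB a b u v = true) S := by
  decide

lemma ub {D : V9 → V9 → Prop} (hor : IsOrientation G9 D) :
    ∃ S : Finset V9, S.card ≤ 4 ∧ IsDomSet D S := by
  classical
  obtain ⟨hsub, hflip⟩ := hor
  have tot : ∀ u v : V9, u ≠ v → (u.1 = v.1 ∨ u.2 = v.2) → D u v ∨ D v u := by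
    intro u v hne hsame
    have hadj : G9.Adj u v := adj_of u v hne hsame
    by_cases h : D u v
    · exact Or.inl h
    · exact Or.inr ((hflip v u hadj.symm).mpr h)
  have asym : ∀ u v : V9, D u v → ¬ D v u := fun u v h => (hflip u v (hsub u v h)).mp h
  by_cases hA : ∃ i j0 : Fin 3, ∀ j, j ≠ j0 → D (i, j0) (i, j)
  · obtain ⟨i, j0, h⟩ := hA
    exact rowSource tot i j0 h
  by_cases hB : ∃ j i0 : Fin 3, ∀ i, i ≠ i0 → D (i0, j) (i, j)
  · obtain ⟨j, i0, h⟩ := hB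
    apply transpose_dom
    apply rowSource (D := fun u v : V9 => D (u.2, u.1) (v.2, v.1)) ?_ j i0
    · intro i hi
      exact h i hi
    · intro u v hne hsame
      refine tot (u.2, u.1) (v.2, v.1) ?_ ?_
      · intro h'
        apply hne
        exact Prod.ext (congrArg Prod.snd h') (congrArg Prod.fst h')
      · rcases hsame with h' | h'
        · exact Or.inr h'
        · exact Or.inl h'
  · push_neg at hA hB
    have rowtri : ∀ i, (∀ x, D (i, x) (i, x + 1)) ∨ (∀ x, D (i, x) (i, x + 2)) := by
      intro i
      refine tri (E := fun x y => D (i, x) (i, y)) ?_ ?_ ?_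
      · intro x y hxy
        refine tot (i, x) (i, y) ?_ (Or.inl rfl)
        intro h; exact hxy (congrArg Prod.snd h)
      · intro x y h h'
        exact asym _ _ h h'
      · intro x
        obtain ⟨j, hj, hD⟩ := hA i x
        exact ⟨j, hj, (tot (i, x) (i, j) (fun h => hj (congrArg Prod.snd h).symm)
          (Or.inl rfl)).resolve_left hD⟩
    have coltri : ∀ j, (∀ x, D (x, j) (x + 1, j)) ∨ (∀ x, D (x, j) (x + 2, j)) := by
      intro j
      refine tri (E := fun x y => D (x, j) (y, j)) ?_ ?_ ?_
      · intro x y hxy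
        refine tot (x, j) (y, j) ?_ (Or.inr rfl)
        intro h; exact hxy (congrArg Prod.fst h)
      · intro x y h h'
        exact asym _ _ h h'
      · intro x
        obtain ⟨i, hi, hD⟩ := hB j x
        exact ⟨i, hi, (tot (x, j) (i, j) (fun h => hi (congrArg Prod.fst h).symm)
          (Or.inr rfl)).resolve_left hD⟩
    set a : Fin 3 → Bool := fun i => decide (∀ x, D (i, x) (i, x + 1)) with ha_def
    set b : Fin 3 → Bool := fun j => decide (∀ x, D (x, j) (x + 1, j)) with hb_def
    have ha : ∀ i, a i = true → ∀ x, D (i, x) (i, x + 1) := fun i h => of_decide_eq_true h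
    have ha' : ∀ i, a i = false → ∀ x, D (i, x) (i, x + 2) := fun i h =>
      (rowtri i).resolve_left (of_decide_eq_false h)
    have hb : ∀ j, b j = true → ∀ x, D (x, j) (x + 1, j) := fun j h => of_decide_eq_true h
    have hb' : ∀ j, b j = false → ∀ x, D (x, j) (x + 2, j) := fun j h =>
      (coltri j).resolve_left (of_decide_eq_false h)
    obtain ⟨S, hc, hd⟩ := cycDom a b
    refine ⟨S, hc, ?_⟩
    intro v hv
    obtain ⟨u, hu, hDu⟩ := hd v hv
    refine ⟨u, hu, ?_⟩
    obtain ⟨i, j⟩ := u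
    obtain ⟨i', j'⟩ := v
    simp only [cycB, Bool.or_eq_true, Bool.and_eq_true, beq_iff_eq] at hDu
    rcases hDu with ⟨h1, h2⟩ | ⟨h1, h2⟩
    · subst h1
      cases haa : a i
      · rw [haa] at h2
        simp only [Bool.false_eq_true, if_false] at h2
        subst h2
        exact ha' i haa j
      · rw [haa] at h2
        simp only [if_true] at h2
        subst h2
        exact ha i haa j
    · subst h1
      cases hbb : b j
      · rw [hbb] at h2
        simp only [Bool.false_eq_true, if_false] at h2
        subst h2
        exact hb' j hbb i
      · rw [hbb] at h2
        simp only [if_true] at h2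
        subst h2
        exact hb j hbb i

def arcs0 : List (V9 × V9) :=
  [((0,0),(0,1)), ((0,0),(0,2)), ((0,0),(1,0)), ((0,1),(0,2)), ((0,1),(1,1)),
   ((0,2),(1,2)), ((0,2),(2,2)), ((1,0),(1,2)), ((1,0),(2,0)), ((1,1),(1,0)),
   ((1,1),(2,1)), ((1,2),(1,1)), ((2,0),(0,0)), ((2,0),(2,2)), ((2,1),(0,1)),
   ((2,1),(2,0)), ((2,2),(1,2)), ((2,2),(2,1))]

def D0 (u v : V9) : Prop := (u, v) ∈ arcs0

instance : DecidableRel D0 := fun u v => by unfold D0; infer_instance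

set_option maxRecDepth 100000 in
lemma D0_orient : IsOrientation G9 D0 := by
  constructor
  · decide
  · decide

set_option maxRecDepth 100000 in
lemma D0_dom4 : ∃ S : Finset V9, S.card = 4 ∧ IsDomSet D0 S := by decide

set_option maxRecDepth 100000 in
lemma D0_not3 : ∀ S : Finset V9, IsDomSet D0 S → 4 ≤ S.card := by decide

lemma D0_domNum : domNum D0 = 4 := by
  obtain ⟨S, hc, hd⟩ := D0_dom4
  have h4 : 4 ∈ {n | ∃ S : Finset V9, S.card = n ∧ IsDomSet D0 S} := ⟨S, hc, hd⟩
  refine le_antisymm (Nat.sInf_le h4) (le_csInf ⟨4, h4⟩ ?_)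
  rintro n ⟨T, hcT, hdT⟩
  exact hcT ▸ D0_not3 T hdT

end Aux

theorem stmt14 :
    DOM ((⊤ : SimpleGraph (Fin 3)) □ (⊤ : SimpleGraph (Fin 3))) = 4 := by
  have hub : ∀ n ∈ {n | ∃ D : V9 → V9 → Prop, IsOrientation G9 D ∧ domNum D = n}, n ≤ 4 := by
    rintro n ⟨D, hor, hdn⟩
    exact hdn ▸ domNum_le_four (ub hor)
  have hmem : 4 ∈ {n | ∃ D : V9 → V9 → Prop, IsOrientation G9 D ∧ domNum D = n} :=
    ⟨D0, D0_orient, D0_domNum⟩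
  exact le_antisymm (csSup_le ⟨4, hmem⟩ hub) (le_csSup ⟨4, hub⟩ hmem)
end

section
/- For any graph G, bip(G) ≤ DOM(G □ K₂) ≤ n(G), where bip(G) is the maximum order of a bipartite induced subgraph of G. In particular, if G is bipartite then DOM(G □ K₂) = n(G). -/
open SimpleGraph

variable {V : Type*}

private lemma aux_orient {W : Type*} (H : SimpleGraph W) (P : Set W)
    (hP : ∀ a ∈ P, ∀ b ∈ P, ¬ H.Adj a b) :
    IsOrientation H (fun a b => H.Adj a b ∧ (a ∈ P ∨ (b ∉ P ∧ WellOrderingRel a b))) := by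
  constructor
  · exact fun u v h => h.1
  · intro u v hadj
    have hne : u ≠ v := hadj.ne
    constructor
    · rintro ⟨-, h⟩ ⟨-, h'⟩
      rcases h with h | ⟨hv, h⟩
      · rcases h' with h' | ⟨hu, h'⟩
        · exact hP v h' u h hadj.symm
        · exact hu h
      · rcases h' with h' | ⟨-, h'⟩
        · exact hv h'
        · exact absurd (_root_.trans h h' : WellOrderingRel u u) (irrefl u)
    · intro hnot
      by_cases hu : u ∈ P
      · exact ⟨hadj, Or.inl hu⟩
      · by_cases hv : v ∈ P
        · exact absurd ⟨hadj.symm, Or.inl hv⟩ hnot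
        · refine ⟨hadj, Or.inr ⟨hv, ?_⟩⟩
          rcases trichotomous_of WellOrderingRel u v with h | h | h
          · exact h
          · exact absurd h hne
          · exact absurd ⟨hadj.symm, Or.inr ⟨hu, h⟩⟩ hnot

private lemma aux_dom_le_card {V : Type*} [Fintype V] (G : SimpleGraph V)
    (D : V × Fin 2 → V × Fin 2 → Prop)
    (h : IsOrientation (G □ (⊤ : SimpleGraph (Fin 2))) D) :
    domNum D ≤ Fintype.card V := by
  classical
  set tl : V → Fin 2 := fun u => if D (u, 0) (u, 1) then 0 else 1 with htl
  have hadj : ∀ u : V, (G □ (⊤ : SimpleGraph (Fin 2))).Adj (u, 0) (u, 1) := by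
    intro u
    rw [SimpleGraph.boxProd_adj]
    exact Or.inr ⟨by simp, rfl⟩
  set S : Finset (V × Fin 2) := Finset.univ.image (fun u => (u, tl u)) with hS
  have hinj : Function.Injective (fun u : V => (u, tl u)) := by
    intro a b hab
    exact congrArg Prod.fst hab
  have hcard : S.card = Fintype.card V := by
    rw [hS, Finset.card_image_of_injective _ hinj, Finset.card_univ]
  have hdom : IsDomSet D S := by
    rintro ⟨w, j⟩ hvS
    refine ⟨(w, tl w), Finset.mem_image_of_mem _ (Finset.mem_univ w), ?_⟩
    have hjne : j ≠ tl w := by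
      intro hj
      exact hvS (by rw [hj]; exact Finset.mem_image_of_mem _ (Finset.mem_univ w))
    by_cases hD : D (w, 0) (w, 1)
    · have h0 : tl w = 0 := by simp [htl, hD]
      have h1 : j = 1 := by rw [h0] at hjne; omega
      rw [h0, h1]; exact hD
    · have h0 : tl w = 1 := by simp [htl, hD]
      have h1 : j = 0 := by rw [h0] at hjne; omega
      rw [h0, h1]
      have hiff := (h.2 _ _ (hadj w))
      rw [hiff] at hD
      exact not_not.mp hD
  exact Nat.sInf_le ⟨S, hcard, hdom⟩

private lemma aux_lower {V : Type*} [Fintype V] (G : SimpleGraph V) (s : Finset V)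
    (hcol : (G.induce (s : Set V)).Colorable 2) :
    s.card ≤ DOM (G □ (⊤ : SimpleGraph (Fin 2))) := by
  classical
  obtain ⟨C⟩ := hcol
  set col : V → Fin 2 := fun v => if h : v ∈ s then C ⟨v, h⟩ else 0 with hcoldef
  set P : Finset (V × Fin 2) := s.image (fun u => (u, col u)) with hPdef
  have hinj : Function.Injective (fun u : V => (u, col u)) := fun a b hab =>
    congrArg Prod.fst hab
  have hPadj : ∀ a ∈ (P : Set (V × Fin 2)), ∀ b ∈ (P : Set (V × Fin 2)),
      ¬ (G □ (⊤ : SimpleGraph (Fin 2))).Adj a b := by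
    intro a ha b hb hadj
    simp only [hPdef, Finset.coe_image, Set.mem_image, Finset.mem_coe] at ha hb
    obtain ⟨u, hu, rfl⟩ := ha
    obtain ⟨v, hv, rfl⟩ := hb
    rw [SimpleGraph.boxProd_adj] at hadj
    rcases hadj with ⟨hGuv, hcc⟩ | ⟨htop, heq⟩
    · have hiadj : (G.induce (s : Set V)).Adj ⟨u, hu⟩ ⟨v, hv⟩ := hGuv
      have hne := C.valid hiadj
      rw [hcoldef] at hcc
      simp only [dif_pos hu, dif_pos hv] at hcc
      exact hne hcc
    · simp only at heq
      subst heq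
      exact htop.ne rfl
  set D : V × Fin 2 → V × Fin 2 → Prop := fun a b =>
    (G □ (⊤ : SimpleGraph (Fin 2))).Adj a b ∧
      (a ∈ (P : Set (V × Fin 2)) ∨ (b ∉ (P : Set (V × Fin 2)) ∧ WellOrderingRel a b)) with hDdef
  have hor : IsOrientation (G □ (⊤ : SimpleGraph (Fin 2))) D := aux_orient _ _ hPadj
  have hdomset_ne : {n | ∃ S : Finset (V × Fin 2), S.card = n ∧ IsDomSet D S}.Nonempty :=
    ⟨Finset.univ.card, Finset.univ, rfl, fun v hv => absurd (Finset.mem_univ v) hv⟩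
  obtain ⟨S, hScard, hSdom⟩ := Nat.sInf_mem hdomset_ne
  have hPS : P ⊆ S := by
    intro a haP
    by_contra haS
    obtain ⟨u, huS, hDu⟩ := hSdom a haS
    rcases hDu.2 with hu | ⟨ha, -⟩
    · exact hPadj u hu a haP hDu.1
    · exact ha haP
  have hsS : s.card ≤ S.card := by
    rw [← Finset.card_image_of_injective s hinj]
    exact Finset.card_le_card hPS
  have hlow : s.card ≤ domNum D := by
    rw [domNum, ← hScard]; exact hsS
  refine le_trans hlow (le_csSup ⟨Fintype.card V, ?_⟩ ⟨D, hor, rfl⟩)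
  rintro n ⟨D', hD', rfl⟩
  exact aux_dom_le_card G D' hD'

theorem stmt16 {V : Type*} [Fintype V] (G : SimpleGraph V) :
    bipNum G ≤ DOM (G □ (⊤ : SimpleGraph (Fin 2))) ∧
    DOM (G □ (⊤ : SimpleGraph (Fin 2))) ≤ Fintype.card V ∧
    (G.Colorable 2 → DOM (G □ (⊤ : SimpleGraph (Fin 2))) = Fintype.card V) := by
  classical
  have hbdd : ∀ n ∈ {n | ∃ D : V × Fin 2 → V × Fin 2 → Prop,
      IsOrientation (G □ (⊤ : SimpleGraph (Fin 2))) D ∧ domNum D = n}, n ≤ Fintype.card V := by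
    rintro n ⟨D, hD, rfl⟩
    exact aux_dom_le_card G D hD
  have hne : {n | ∃ D : V × Fin 2 → V × Fin 2 → Prop,
      IsOrientation (G □ (⊤ : SimpleGraph (Fin 2))) D ∧ domNum D = n}.Nonempty := by
    refine ⟨_, _, aux_orient (G □ (⊤ : SimpleGraph (Fin 2))) ∅ (by simp), rfl⟩
  have hupper : DOM (G □ (⊤ : SimpleGraph (Fin 2))) ≤ Fintype.card V := csSup_le hne hbdd
  have hbip : bipNum G ≤ DOM (G □ (⊤ : SimpleGraph (Fin 2))) := by
    refine csSup_le ⟨0, ∅, Finset.card_empty, ?_⟩ ?_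
    · exact ⟨⟨fun a => 0, fun {a b} h => absurd a.2 (by simp)⟩⟩
    · rintro n ⟨s, rfl, hcol⟩
      exact aux_lower G s hcol
  refine ⟨hbip, hupper, fun hc => ?_⟩
  obtain ⟨C⟩ := hc
  have hcu : (G.induce ((Finset.univ : Finset V) : Set V)).Colorable 2 :=
    ⟨⟨fun a => C a.1, fun {a b} h => C.valid h⟩⟩
  have := aux_lower G Finset.univ hcu
  rw [Finset.card_univ] at this
  exact le_antisymm hupper this
end

section
/- Given positive integers n₁ ≤ n₂ ≤ ⋯ ≤ n_k with k ≥ 2, the complete multipartite graph K_{n₁,…,n_k} satisfies n_k ≤ DOM(K_{n₁,…,n_k}) ≤ max{n_k, k}. In particular, if n_k ≥ k, then DOM(K_{n₁,…,n_k}) = n_k. -/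
open SimpleGraph

variable {V : Type*}

section Aux

variable {k : ℕ} {n : Fin k → ℕ}

/-- Orientation where all arcs point away from part `L`. -/
def lowD (n : Fin k → ℕ) (L : Fin k) :
    ((i : Fin k) × Fin (n i)) → ((i : Fin k) × Fin (n i)) → Prop :=
  fun u v => u.1 ≠ v.1 ∧ v.1 ≠ L ∧ (u.1 = L ∨ u.1 < v.1)

lemma lowD_orientation (L : Fin k) :
    IsOrientation (completeMultipartiteGraph (fun i => Fin (n i))) (lowD n L) := by
  constructor
  · intro u v h
    exact h.1
  · intro u v huv
    simp only [comap_adj, top_adj] at huv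
    simp only [lowD, Ne, Fin.ext_iff, Fin.lt_def] at *
    omega

lemma lowD_lower (L : Fin k) (S : Finset ((i : Fin k) × Fin (n i)))
    (hS : IsDomSet (lowD n L) S) : n L ≤ S.card := by
  have hsub : ∀ a : Fin (n L), (⟨L, a⟩ : (i : Fin k) × Fin (n i)) ∈ S := by
    intro a
    by_contra hmem
    obtain ⟨u, _, hu⟩ := hS _ hmem
    exact hu.2.1 rfl
  calc n L = (Finset.univ.image (fun a : Fin (n L) => (⟨L, a⟩ : (i : Fin k) × Fin (n i)))).card := by
        rw [Finset.card_image_of_injective _ (fun a b h => by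
          simpa using (Sigma.mk.inj_iff.mp h).2)]
        simp
    _ ≤ S.card := Finset.card_le_card (by
        intro x hx
        simp only [Finset.mem_image, Finset.mem_univ, true_and] at hx
        obtain ⟨a, rfl⟩ := hx
        exact hsub a)

lemma domNum_upper (hk : 2 ≤ k) (hmono : Monotone n)
    (D : ((i : Fin k) × Fin (n i)) → ((i : Fin k) × Fin (n i)) → Prop)
    (hD : IsOrientation (completeMultipartiteGraph (fun i => Fin (n i))) D) :
    domNum D ≤ max (n ⟨k - 1, Nat.sub_lt (by omega) Nat.one_pos⟩) k := by
  classical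
  set L : Fin k := ⟨k - 1, Nat.sub_lt (by omega) Nat.one_pos⟩ with hL
  suffices h : ∃ S : Finset ((i : Fin k) × Fin (n i)), IsDomSet D S ∧ S.card ≤ max (n L) k by
    obtain ⟨S, hdom, hcard⟩ := h
    exact le_trans (Nat.sInf_le ⟨S, rfl, hdom⟩) hcard
  by_cases h : ∃ i : Fin k, ∀ v : (i : Fin k) × Fin (n i), v.1 ≠ i → ∃ a : Fin (n i), D ⟨i, a⟩ v
  · obtain ⟨i, hi⟩ := h
    refine ⟨Finset.univ.image (fun a : Fin (n i) => (⟨i, a⟩ : (j : Fin k) × Fin (n j))), ?_, ?_⟩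
    · intro v hv
      have hvi : v.1 ≠ i := by
        rintro h'
        apply hv
        simp only [Finset.mem_image, Finset.mem_univ, true_and]
        obtain ⟨j, b⟩ := v
        cases h'
        exact ⟨b, rfl⟩
      obtain ⟨a, ha⟩ := hi v hvi
      exact ⟨⟨i, a⟩, by simp, ha⟩
    · calc (Finset.univ.image (fun a : Fin (n i) => (⟨i, a⟩ : (j : Fin k) × Fin (n j)))).card
          ≤ (Finset.univ : Finset (Fin (n i))).card := Finset.card_image_le
      _ = n i := by simp
      _ ≤ n L := hmono (show i ≤ L from Fin.le_def.mpr (by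
          have := i.isLt; simp only [hL]; omega))
      _ ≤ _ := le_max_left _ _
  · push_neg at h
    choose w hw1 hw2 using h
    have hbeat : ∀ (i : Fin k) (a : Fin (n i)), D (w i) ⟨i, a⟩ := by
      intro i a
      have hadj : (completeMultipartiteGraph (fun i => Fin (n i))).Adj ⟨i, a⟩ (w i) := by
        simp only [comap_adj, top_adj]
        exact fun hh => (hw1 i) hh.symm
      by_contra hc
      exact hw2 i a ((hD.2 _ _ hadj).mpr hc)
    refine ⟨Finset.univ.image w, ?_, ?_⟩
    · intro v hv
      refine ⟨w v.1, by simp, ?_⟩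
      have := hbeat v.1 v.2
      exact this
    · calc (Finset.univ.image w).card ≤ (Finset.univ : Finset (Fin k)).card :=
          Finset.card_image_le
      _ = k := by simp
      _ ≤ max (n L) k := le_max_right _ _

lemma dom_bounds (hk : 2 ≤ k) (hmono : Monotone n) :
    n ⟨k - 1, Nat.sub_lt (by omega) Nat.one_pos⟩ ≤ DOM (completeMultipartiteGraph (fun i => Fin (n i))) ∧
    DOM (completeMultipartiteGraph (fun i => Fin (n i))) ≤ max (n ⟨k - 1, Nat.sub_lt (by omega) Nat.one_pos⟩) k := by
  classical
  set L : Fin k := ⟨k - 1, Nat.sub_lt (by omega) Nat.one_pos⟩ with hL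
  set G := completeMultipartiteGraph (fun i => Fin (n i)) with hG
  set T : Set ℕ := {m | ∃ D, IsOrientation G D ∧ domNum D = m} with hT
  have hmemlow : domNum (lowD n L) ∈ T := ⟨lowD n L, lowD_orientation L, rfl⟩
  have hub : ∀ m ∈ T, m ≤ max (n L) k := by
    rintro m ⟨D, hD, rfl⟩
    exact domNum_upper hk hmono D hD
  have hbdd : BddAbove T := ⟨max (n L) k, hub⟩
  constructor
  · have h1 : n L ≤ domNum (lowD n L) := by
      apply le_csInf
      · refine ⟨(Finset.univ : Finset ((i : Fin k) × Fin (n i))).card, Finset.univ, rfl, ?_⟩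
        intro v hv
        exact absurd (Finset.mem_univ v) hv
      · rintro m ⟨S, rfl, hS⟩
        exact lowD_lower L S hS
    exact le_trans h1 (le_csSup hbdd hmemlow)
  · exact csSup_le ⟨_, hmemlow⟩ hub

end Aux

theorem stmt18 (k : ℕ) (hk : 2 ≤ k) (n : Fin k → ℕ)
    (hmono : Monotone n) (hpos : ∀ i, 1 ≤ n i) :
    n ⟨k - 1, by omega⟩ ≤ DOM (completeMultipartiteGraph (fun i => Fin (n i))) ∧
    DOM (completeMultipartiteGraph (fun i => Fin (n i))) ≤ max (n ⟨k - 1, by omega⟩) k ∧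
    (k ≤ n ⟨k - 1, by omega⟩ →
      DOM (completeMultipartiteGraph (fun i => Fin (n i))) = n ⟨k - 1, by omega⟩) := by
  obtain ⟨h1, h2⟩ := dom_bounds hk hmono
  refine ⟨h1, h2, fun hkn => ?_⟩
  exact le_antisymm (by rwa [max_eq_left hkn] at h2) h1
end

section
/- Let k ≥ 2 and s ≥ 2, and let X_f be the orientation of the lexicographic product C_{2k+1} ∘ \overline{K_s} in which, indexing the cycle vertices v₁,…,v_{2k+1}, all edges between layer i and layer i+1 (for i ∈ [2k]) are oriented from layer i to layer i+1, and all edges between layer 1 and layer 2k+1 are oriented from layer 1 to layer 2k+1. Then X_f is acyclic, γ(X_f) = s + 2k − 2, and ρ(X_f) = s + k − 1; in particular γ(X_f) ≠ ρ(X_f) for k ≥ 2, giving an acyclic digraph whose domination number strictly exceeds its packing number. -/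
open SimpleGraph

variable {V : Type*}

section Aux

private lemma aux_modsub (m a b : ℕ) (hm : 2 ≤ m) (ha : a < m) (hb : b < m) :
    (m - b + a) % m = 1 ↔ (a = b + 1 ∨ (b = m - 1 ∧ a = 0)) := by
  rcases lt_or_ge (m - b + a) m with h | h
  · rw [Nat.mod_eq_of_lt h]; omega
  · have h2 : m - b + a - m < m := by omega
    rw [Nat.mod_eq_sub_mod h, Nat.mod_eq_of_lt h2]; omega

private lemma aux_cyc_adj (k : ℕ) (hk : 1 ≤ k) (u v : Fin (2*k+1)) :
    (cycleGraph (2*k+1)).Adj u v ↔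
      ((u:ℕ) + 1 = v ∨ (v:ℕ) + 1 = u ∨ ((u:ℕ) = 0 ∧ (v:ℕ) = 2*k) ∨ ((v:ℕ) = 0 ∧ (u:ℕ) = 2*k)) := by
  rw [SimpleGraph.cycleGraph_adj', Fin.sub_def, Fin.sub_def]
  simp only [Fin.val_mk]
  rw [aux_modsub _ _ _ (by omega) u.2 v.2, aux_modsub _ _ _ (by omega) v.2 u.2]
  omega

private lemma aux_chain_bound (b : ℕ → ℕ) : ∀ n, (∀ i < n, 1 ≤ b i ∨ 2 ≤ b (i+1)) →
    n + min (b n) 1 ≤ ∑ i ∈ Finset.range (n+1), b i := by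
  intro n
  induction n with
  | zero => intro _; simp
  | succ n ih =>
    intro h
    have h1 := ih (fun i hi => h i (by omega))
    have h2 := h n (by omega)
    rw [Finset.sum_range_succ]
    omega

private lemma aux_sum_pair (b : ℕ → ℕ) : ∀ m, ∑ i ∈ Finset.range (2*m), b i
    = ∑ j ∈ Finset.range m, (b (2*j) + b (2*j+1)) := by
  intro m; induction m with
  | zero => simp
  | succ m ih =>
    have e : 2*(m+1) = (2*m)+1+1 := by ring
    rw [e, Finset.sum_range_succ, Finset.sum_range_succ, ih, Finset.sum_range_succ]
    omega

end Aux

theorem stmt19 (k s : ℕ) (hk : 2 ≤ k) (hs : 2 ≤ s)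
    (D : Fin (2 * k + 1) × Fin s → Fin (2 * k + 1) × Fin s → Prop)
    (hD : D = fun a b =>
      ((a.1 : ℕ) + 1 = (b.1 : ℕ)) ∨ ((a.1 : ℕ) = 0 ∧ (b.1 : ℕ) = 2 * k)) :
    IsOrientation (lexProd (cycleGraph (2 * k + 1)) (⊥ : SimpleGraph (Fin s))) D ∧
    DigraphAcyclic D ∧
    domNum D = s + 2 * k - 2 ∧
    packNum D = s + k - 1 ∧
    domNum D ≠ packNum D := by
  have hDiff : ∀ u v : Fin (2*k+1) × Fin s, D u v ↔
      ((u.1 : ℕ) + 1 = (v.1 : ℕ) ∨ ((u.1 : ℕ) = 0 ∧ (v.1 : ℕ) = 2*k)) := by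
    subst hD; intro u v; rfl
  -- adjacency characterization of the lexicographic product
  have hadj : ∀ a b : Fin (2*k+1) × Fin s,
      (lexProd (cycleGraph (2*k+1)) (⊥ : SimpleGraph (Fin s))).Adj a b ↔
      (a ≠ b ∧ ((a.1:ℕ)+1 = (b.1:ℕ) ∨ (b.1:ℕ)+1 = (a.1:ℕ) ∨ ((a.1:ℕ)=0 ∧ (b.1:ℕ)=2*k)
        ∨ ((b.1:ℕ)=0 ∧ (a.1:ℕ)=2*k))) := by
    intro a b
    simp only [lexProd, SimpleGraph.fromRel_adj, SimpleGraph.bot_adj, and_false, false_and,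
      and_false, or_false]
    rw [aux_cyc_adj k (by omega), aux_cyc_adj k (by omega)]
    constructor
    · rintro ⟨h1, h2⟩; exact ⟨h1, by omega⟩
    · rintro ⟨h1, h2⟩; exact ⟨h1, by omega⟩
  have hdomval : domNum D = s + 2 * k - 2 := by
    classical
    have hdom_eq : {n | ∃ S : Finset (Fin (2*k+1) × Fin s), S.card = n ∧ IsDomSet D S}
        = {n | ∃ S : Finset (Fin (2 * k + 1) × Fin s), S.card = n ∧ IsDomSet D S} := rfl
    -- the special vertices
    let c0 : Fin (2*k+1) := ⟨0, by omega⟩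
    let f0 : Fin s := ⟨0, by omega⟩
    let L0 : Finset (Fin (2*k+1) × Fin s) := Finset.univ.image fun j : Fin s => (c0, j)
    let Mid : Finset (Fin (2*k+1) × Fin s) := (Finset.Icc 1 (2*k-2)).image
        fun n => ((⟨n % (2*k+1), Nat.mod_lt _ (by omega)⟩ : Fin (2*k+1)), f0)
    have hmemS : ∀ v : Fin (2*k+1) × Fin s, v ∈ L0 ∪ Mid ↔
        ((v.1:ℕ) = 0 ∨ (1 ≤ (v.1:ℕ) ∧ (v.1:ℕ) ≤ 2*k-2 ∧ v.2 = f0)) := by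
      intro v
      simp only [L0, Mid, Finset.mem_union, Finset.mem_image, Finset.mem_univ, true_and,
        Finset.mem_Icc]
      constructor
      · rintro (⟨j, hj⟩ | ⟨n, ⟨hn1, hn2⟩, hn⟩)
        · left; rw [← hj]
        · right; rw [← hn]
          simp only [Fin.val_mk]
          rw [Nat.mod_eq_of_lt (by omega)]
          exact ⟨hn1, hn2, by trivial⟩
      · rintro (h0 | ⟨h1, h2, h3⟩)
        · exact Or.inl ⟨v.2, by rw [Prod.ext_iff]; exact ⟨Fin.ext h0.symm, rfl⟩⟩
        · refine Or.inr ⟨(v.1:ℕ), ⟨h1, h2⟩, ?_⟩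
          rw [Prod.ext_iff]
          refine ⟨Fin.ext ?_, h3.symm⟩
          simp only [Fin.val_mk]
          exact Nat.mod_eq_of_lt (by omega)
    have hScard : (L0 ∪ Mid).card = s + 2*k - 2 := by
      have hdisj : Disjoint L0 Mid := by
        rw [Finset.disjoint_left]
        intro v hv hv'
        simp only [L0, Finset.mem_image, Finset.mem_univ, true_and] at hv
        simp only [Mid, Finset.mem_image, Finset.mem_Icc] at hv'
        obtain ⟨j, hj⟩ := hv
        obtain ⟨n, ⟨hn1, hn2⟩, hn⟩ := hv'
        have e1 : (v.1:ℕ) = 0 := by rw [← hj]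
        have e2 : (v.1:ℕ) = n % (2*k+1) := by rw [← hn]
        rw [Nat.mod_eq_of_lt (by omega)] at e2
        omega
      rw [Finset.card_union_of_disjoint hdisj]
      have hc1 : L0.card = s := by
        rw [Finset.card_image_of_injective _ (fun a b hab => (Prod.ext_iff.mp hab).2)]
        simp
      have hc2 : Mid.card = 2*k - 2 := by
        rw [Finset.card_image_of_injOn]
        · rw [Nat.card_Icc]; omega
        · intro n hn n' hn' h
          simp only [Finset.coe_Icc, Set.mem_Icc] at hn hn'
          have := (Prod.ext_iff.mp h).1
          have hval : n % (2*k+1) = n' % (2*k+1) := congrArg Fin.val this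
          rw [Nat.mod_eq_of_lt (by omega), Nat.mod_eq_of_lt (by omega)] at hval
          exact hval
      rw [hc1, hc2]; omega
    have hIsDom : IsDomSet D (L0 ∪ Mid) := by
      intro v hv
      rw [hmemS] at hv
      have hvlt : (v.1:ℕ) < 2*k+1 := v.1.2
      have hv0 : (v.1:ℕ) ≠ 0 := fun h => hv (Or.inl h)
      by_cases hc1 : (v.1:ℕ) = 1 ∨ (v.1:ℕ) = 2*k
      · refine ⟨(c0, v.2), ?_, ?_⟩
        · rw [hmemS]; exact Or.inl rfl
        · rw [hDiff]
          have : ((c0, v.2).1 : ℕ) = 0 := rfl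
          omega
      · push_neg at hc1
        have h2 : 2 ≤ (v.1:ℕ) ∧ (v.1:ℕ) ≤ 2*k-1 := by omega
        refine ⟨((⟨((v.1:ℕ)-1) % (2*k+1), Nat.mod_lt _ (by omega)⟩ : Fin (2*k+1)), f0), ?_, ?_⟩
        · rw [hmemS]
          right
          simp only [Fin.val_mk]
          rw [Nat.mod_eq_of_lt (by omega)]
          exact ⟨by omega, by omega, by trivial⟩
        · rw [hDiff]
          simp only [Fin.val_mk]
          rw [Nat.mod_eq_of_lt (by omega)]
          omega
    have hmem : (s + 2*k - 2) ∈ {n | ∃ S : Finset (Fin (2*k+1) × Fin s),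
        S.card = n ∧ IsDomSet D S} := ⟨L0 ∪ Mid, hScard, hIsDom⟩
    have hlb : ∀ n ∈ {n | ∃ S : Finset (Fin (2*k+1) × Fin s), S.card = n ∧ IsDomSet D S},
        s + 2*k - 2 ≤ n := by
      rintro n ⟨S, rfl, hS⟩
      set a : ℕ → ℕ := fun i => (S.filter fun v => (v.1:ℕ) = i).card with ha
      have hcard : S.card = ∑ i ∈ Finset.range (2*k+1), a i :=
        Finset.card_eq_sum_card_fiberwise (fun v _ => Finset.mem_range.mpr v.1.2)
      have ha0 : s ≤ a 0 := by
        have hsub : ∀ j : Fin s, ((⟨0, by omega⟩ : Fin (2*k+1)), j) ∈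
            S.filter fun v => (v.1:ℕ) = 0 := by
          intro j
          rw [Finset.mem_filter]
          refine ⟨?_, rfl⟩
          by_contra hns
          obtain ⟨u, hu, hDu⟩ := hS _ hns
          rw [hDiff] at hDu
          simp only [Fin.val_mk] at hDu
          omega
        calc s = (Finset.univ : Finset (Fin s)).card := by simp
        _ ≤ _ := Finset.card_le_card_of_injOn
            (fun j => ((⟨0, by omega⟩ : Fin (2*k+1)), j)) (fun j _ => hsub j)
            (fun j _ j' _ h => (Prod.ext_iff.mp h).2)
      have hconstr : ∀ i < 2*k - 2, 1 ≤ a (i+1) ∨ 2 ≤ a (i+2) := by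
        intro i hi
        by_contra hcon
        push_neg at hcon
        obtain ⟨hA, hB⟩ := hcon
        have hA0 : (S.filter fun v => (v.1:ℕ) = i+1).card = 0 := by
          have h' : a (i+1) = 0 := by omega
          exact h'
        have hempty : ∀ v ∈ S, ¬ ((v.1:ℕ) = i+1) :=
          Finset.filter_eq_empty_iff.mp (Finset.card_eq_zero.mp hA0)
        have hmem2 : ∀ j : Fin s, ((⟨i+2, by omega⟩ : Fin (2*k+1)), j) ∈
            S.filter fun v => (v.1:ℕ) = i+2 := by
          intro j
          rw [Finset.mem_filter]
          refine ⟨?_, rfl⟩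
          by_contra hns
          obtain ⟨u, hu, hDu⟩ := hS _ hns
          rw [hDiff] at hDu
          simp only [Fin.val_mk] at hDu
          have := hempty u hu
          omega
        have hpair : ({((⟨i+2, by omega⟩ : Fin (2*k+1)), (⟨0, by omega⟩ : Fin s)),
            ((⟨i+2, by omega⟩ : Fin (2*k+1)), (⟨1, by omega⟩ : Fin s))} : Finset _) ⊆
            S.filter fun v => (v.1:ℕ) = i+2 := by
          intro x hx
          rw [Finset.mem_insert, Finset.mem_singleton] at hx
          rcases hx with h | h <;> rw [h] <;> exact hmem2 _
        have h2le : 2 ≤ a (i+2) := by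
          have := Finset.card_le_card hpair
          rw [Finset.card_pair (by
            intro h
            have := (Prod.ext_iff.mp h).2
            have : (0:ℕ) = 1 := congrArg Fin.val this
            omega)] at this
          exact this
        omega
      have hchain := aux_chain_bound (fun i => a (i+1)) (2*k-2) (fun i hi => hconstr i hi)
      have e1 : 2*k + 1 = (2*k) + 1 := rfl
      have hsum1 : ∑ i ∈ Finset.range (2*k+1), a i
          = (∑ i ∈ Finset.range (2*k), a (i+1)) + a 0 := Finset.sum_range_succ' a (2*k)
      have e2 : 2*k = (2*k-1) + 1 := by omega
      have hsum2 := Finset.sum_range_succ (fun i => a (i+1)) (2*k-1)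
      rw [← e2] at hsum2
      beta_reduce at hsum2 hchain
      have e3 : 2*k-1 = (2*k-2) + 1 := by omega
      rw [← e3] at hchain
      have hchain' : 2*k-2 ≤ ∑ i ∈ Finset.range (2*k-1), a (i+1) :=
        le_trans (Nat.le_add_right _ _) hchain
      omega
    rw [domNum, hdom_eq]
    refine le_antisymm (Nat.sInf_le hmem) (le_csInf ⟨_, hmem⟩ hlb)
  have hpackval : packNum D = s + k - 1 := by
    classical
    let c0 : Fin (2*k+1) := ⟨0, by omega⟩
    let f0 : Fin s := ⟨0, by omega⟩
    let L0 : Finset (Fin (2*k+1) × Fin s) := Finset.univ.image fun j : Fin s => (c0, j)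
    let E : Finset (Fin (2*k+1) × Fin s) := (Finset.Icc 1 (k-1)).image
        fun t => ((⟨(2*t) % (2*k+1), Nat.mod_lt _ (by omega)⟩ : Fin (2*k+1)), f0)
    have hmemP : ∀ v : Fin (2*k+1) × Fin s, v ∈ L0 ∪ E ↔
        ((v.1:ℕ) = 0 ∨ (∃ t, 1 ≤ t ∧ t ≤ k-1 ∧ (v.1:ℕ) = 2*t ∧ v.2 = f0)) := by
      intro v
      simp only [L0, E, Finset.mem_union, Finset.mem_image, Finset.mem_univ, true_and,
        Finset.mem_Icc]
      constructor
      · rintro (⟨j, hj⟩ | ⟨t, ⟨ht1, ht2⟩, ht⟩)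
        · left; rw [← hj]
        · right
          refine ⟨t, ht1, ht2, ?_, ?_⟩
          · rw [← ht]; simp only [Fin.val_mk]; exact Nat.mod_eq_of_lt (by omega)
          · rw [← ht]
      · rintro (h0 | ⟨t, ht1, ht2, ht3, ht4⟩)
        · exact Or.inl ⟨v.2, by rw [Prod.ext_iff]; exact ⟨Fin.ext h0.symm, rfl⟩⟩
        · refine Or.inr ⟨t, ⟨ht1, ht2⟩, ?_⟩
          rw [Prod.ext_iff]
          refine ⟨Fin.ext ?_, ht4.symm⟩
          simp only [Fin.val_mk]
          rw [Nat.mod_eq_of_lt (by omega)]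
          omega
    have hPcard : (L0 ∪ E).card = s + k - 1 := by
      have hdisj : Disjoint L0 E := by
        rw [Finset.disjoint_left]
        intro v hv hv'
        simp only [L0, Finset.mem_image, Finset.mem_univ, true_and] at hv
        simp only [E, Finset.mem_image, Finset.mem_Icc] at hv'
        obtain ⟨j, hj⟩ := hv
        obtain ⟨t, ⟨ht1, ht2⟩, ht⟩ := hv'
        have e1 : (v.1:ℕ) = 0 := by rw [← hj]
        have e2 : (v.1:ℕ) = (2*t) % (2*k+1) := by rw [← ht]
        rw [Nat.mod_eq_of_lt (by omega)] at e2
        omega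
      rw [Finset.card_union_of_disjoint hdisj]
      have hc1 : L0.card = s := by
        rw [Finset.card_image_of_injective _ (fun a b hab => (Prod.ext_iff.mp hab).2)]
        simp
      have hc2 : E.card = k - 1 := by
        rw [Finset.card_image_of_injOn]
        · rw [Nat.card_Icc]; omega
        · intro t ht t' ht' h
          simp only [Finset.coe_Icc, Set.mem_Icc] at ht ht'
          have := (Prod.ext_iff.mp h).1
          have hval : (2*t) % (2*k+1) = (2*t') % (2*k+1) := congrArg Fin.val this
          rw [Nat.mod_eq_of_lt (by omega), Nat.mod_eq_of_lt (by omega)] at hval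
          omega
      rw [hc1, hc2]; omega
    have hIsPack : IsPacking D (L0 ∪ E) := by
      constructor
      · intro u hu v hv hDuv
        rw [hmemP] at hu hv
        rw [hDiff] at hDuv
        rcases hu with h | ⟨t, ht1, ht2, ht3, _⟩ <;>
          rcases hv with h' | ⟨t', h1', h2', h3', _⟩ <;> omega
      · intro u hu v hv hne w hw
        obtain ⟨hwu, hwv⟩ := hw
        rw [hmemP] at hu hv
        rw [hDiff] at hwu hwv
        have hu2k : (u.1:ℕ) ≠ 2*k := by
          rcases hu with h | ⟨t, a1, b1, c1, _⟩ <;> omega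
        have hv2k : (v.1:ℕ) ≠ 2*k := by
          rcases hv with h | ⟨t, a1, b1, c1, _⟩ <;> omega
        have e1 : (u.1:ℕ) = (w.1:ℕ)+1 := by omega
        have e2 : (v.1:ℕ) = (w.1:ℕ)+1 := by omega
        rcases hu with h | ⟨t, a1, b1, c1, hu2⟩
        · omega
        rcases hv with h' | ⟨t', a1', b1', c1', hv2⟩
        · omega
        apply hne
        rw [Prod.ext_iff]
        exact ⟨Fin.ext (by omega), hu2.trans hv2.symm⟩
    have hmem : (s + k - 1) ∈ {n | ∃ P : Finset (Fin (2*k+1) × Fin s),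
        P.card = n ∧ IsPacking D P} := ⟨L0 ∪ E, hPcard, hIsPack⟩
    have hub : ∀ n ∈ {n | ∃ P : Finset (Fin (2*k+1) × Fin s), P.card = n ∧ IsPacking D P},
        n ≤ s + k - 1 := by
      rintro n ⟨P, rfl, hP1, hP2⟩
      set b : ℕ → ℕ := fun i => (P.filter fun v => (v.1:ℕ) = i).card with hbdef
      have hcard : P.card = ∑ i ∈ Finset.range (2*k+1), b i :=
        Finset.card_eq_sum_card_fiberwise (fun v _ => Finset.mem_range.mpr v.1.2)
      have hb1 : ∀ i, 1 ≤ i → i ≤ 2*k → b i ≤ 1 := by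
        intro i hi1 hi2
        apply Finset.card_le_one.mpr
        intro u hu v hv
        rw [Finset.mem_filter] at hu hv
        by_contra hne
        refine hP2 u hu.1 v hv.1 hne ((⟨i-1, by omega⟩ : Fin (2*k+1)), (⟨0, by omega⟩ : Fin s))
          ⟨?_, ?_⟩ <;>
        · rw [hDiff]; simp only [Fin.val_mk]; omega
      have hb2 : ∀ i, i + 1 ≤ 2*k → b i = 0 ∨ b (i+1) = 0 := by
        intro i hi
        by_contra hcon
        push_neg at hcon
        obtain ⟨h1, h2⟩ := hcon
        obtain ⟨u, hu⟩ := Finset.card_pos.mp (Nat.pos_of_ne_zero h1)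
        obtain ⟨v, hv⟩ := Finset.card_pos.mp (Nat.pos_of_ne_zero h2)
        rw [Finset.mem_filter] at hu hv
        exact hP1 u hu.1 v hv.1 (by rw [hDiff]; omega)
      have hb0 : b 0 ≤ s := by
        have h1 : b 0 ≤ (Finset.univ : Finset (Fin s)).card := by
          apply Finset.card_le_card_of_injOn (fun v => v.2) (fun v _ => Finset.mem_univ _)
          intro u hu v hv h
          simp only [Finset.coe_filter, Set.mem_setOf_eq] at hu hv
          rw [Prod.ext_iff]
          exact ⟨Fin.ext (by omega), h⟩
        simpa using h1
      have hb3 : 1 ≤ b 0 → b 1 = 0 ∧ b (2*k) = 0 := by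
        intro h0
        obtain ⟨u, hu⟩ := Finset.card_pos.mp (by omega : 0 < b 0)
        rw [Finset.mem_filter] at hu
        constructor
        · by_contra h1
          obtain ⟨v, hv⟩ := Finset.card_pos.mp (Nat.pos_of_ne_zero h1)
          rw [Finset.mem_filter] at hv
          exact hP1 u hu.1 v hv.1 (by rw [hDiff]; omega)
        · by_contra h1
          obtain ⟨v, hv⟩ := Finset.card_pos.mp (Nat.pos_of_ne_zero h1)
          rw [Finset.mem_filter] at hv
          exact hP1 u hu.1 v hv.1 (by rw [hDiff]; omega)
      rcases Nat.eq_zero_or_pos (b 0) with h0 | h0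
      · -- no packing vertex in layer 0 : total at most k
        have hsum1 : ∑ i ∈ Finset.range (2*k+1), b i
            = (∑ i ∈ Finset.range (2*k), b (i+1)) + b 0 := Finset.sum_range_succ' b (2*k)
        have hpair := aux_sum_pair (fun i => b (i+1)) k
        have hble : ∀ j ∈ Finset.range k, b (2*j+1) + b (2*j+1+1) ≤ 1 := by
          intro j hj
          rw [Finset.mem_range] at hj
          have u1 := hb1 (2*j+1) (by omega) (by omega)
          have u2 := hb1 (2*j+1+1) (by omega) (by omega)
          have u3 := hb2 (2*j+1) (by omega)
          omega
        have hsle : ∑ j ∈ Finset.range k, (b (2*j+1) + b (2*j+1+1)) ≤ k := by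
          calc ∑ j ∈ Finset.range k, (b (2*j+1) + b (2*j+1+1))
              ≤ ∑ _j ∈ Finset.range k, 1 := Finset.sum_le_sum hble
          _ = k := by simp
        omega
      · obtain ⟨hbl1, hbl2k⟩ := hb3 h0
        have hsum1 : ∑ i ∈ Finset.range (2*k+1), b i
            = (∑ i ∈ Finset.range (2*k), b (i+1)) + b 0 := Finset.sum_range_succ' b (2*k)
        have hsum2 := Finset.sum_range_succ' (fun i => b (i+1)) (2*k-1)
        have e2 : 2*k = (2*k-1) + 1 := by omega
        rw [← e2] at hsum2
        simp only [Nat.zero_add] at hsum2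
        have hsum3 := Finset.sum_range_succ (fun i => b (i+1+1)) (2*k-2)
        have e3 : 2*k-1 = (2*k-2) + 1 := by omega
        rw [← e3] at hsum3
        rw [← e2] at hsum3
        have hpair := aux_sum_pair (fun i => b (i+1+1)) (k-1)
        have e5 : 2*(k-1) = 2*k-2 := by omega
        rw [e5] at hpair
        have hble : ∀ j ∈ Finset.range (k-1), b (2*j+1+1) + b (2*j+1+1+1) ≤ 1 := by
          intro j hj
          rw [Finset.mem_range] at hj
          have u1 := hb1 (2*j+1+1) (by omega) (by omega)
          have u2 := hb1 (2*j+1+1+1) (by omega) (by omega)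
          have u3 := hb2 (2*j+1+1) (by omega)
          omega
        have hsle : ∑ j ∈ Finset.range (k-1), (b (2*j+1+1) + b (2*j+1+1+1)) ≤ k-1 := by
          calc ∑ j ∈ Finset.range (k-1), (b (2*j+1+1) + b (2*j+1+1+1))
              ≤ ∑ _j ∈ Finset.range (k-1), 1 := Finset.sum_le_sum hble
          _ = k-1 := by simp
        omega
    rw [packNum]
    exact le_antisymm (csSup_le ⟨_, hmem⟩ hub) (le_csSup ⟨s + k - 1, hub⟩ hmem)
  refine ⟨?_, ?_, hdomval, hpackval, by rw [hdomval, hpackval]; omega⟩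
  · -- orientation
    constructor
    · intro u v huv
      rw [hDiff] at huv
      rw [hadj]
      refine ⟨fun e => by rw [e] at huv; omega, by omega⟩
    · intro u v hadj'
      rw [hadj] at hadj'
      obtain ⟨hne, hd⟩ := hadj'
      rw [hDiff, hDiff]
      constructor
      · intro h1 h2; omega
      · intro h1; omega
  · -- acyclic
    rintro ⟨m, c, hm0, hstep, hcyc⟩
    have mono : ∀ i ≤ m, i + ((c 0).1 : ℕ) ≤ ((c i).1 : ℕ) := by
      intro i
      induction i with
      | zero => simp
      | succ i ih =>
        intro hi
        have h1 := ih (by omega)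
        have h2 := hstep i (by omega)
        rw [hDiff] at h2
        omega
    have := mono m le_rfl
    rw [hcyc] at this
    omega
end
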